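/- arXiv:1505.04818 — 3 statements merged into one kernel-verified Lean document; each statement's English description precedes it below -/
import Mathlib

section
/- Let A be a CDGA over ℚ, Q an A-dgmodule, and f: Q → A a morphism of A-dgmodules that is balanced, i.e. f(x)·y = x·f(y) for all x, y ∈ Q. Then the mapping cone C(f) = A ⊕_f sQ, equipped with the semi-trivial graded-commutative product, is a CDGA; in particular its differential δ(a, sq) = (d_A(a) + f(q), −s d_Q(q)) satisfies the Leibniz rule with respect to this product. -/
/-!
Common framework: commutative differential graded algebras (CDGAs) over `ℚ`,
differential graded modules, linear duals (represented via perfect pairings),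
mapping cones with their semi-trivial multiplication, Poincaré duality CDGAs,
orientations, orphans, and Sullivan extensions.

A CDGA over `ℚ` is presented as a (possibly non-commutative) ring `A` which is a
`ℚ`-algebra, together with an internal `ℕ`-grading by `ℚ`-subspaces for which
`A` is the internal direct sum of the pieces, such that the product is graded
(with graded commutativity `a·b = (-1)^{|a||b|} b·a`), and a degree `+1`
`ℚ`-linear differential squaring to zero and satisfying the Leibniz rule.
-/

noncomputable section

structure CDGAStruct (A : Type) [Ring A] [Algebra ℚ A] : Type where
  gr : ℕ → Submodule ℚ A
  internal : DirectSum.IsInternal gr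
  one_mem : (1 : A) ∈ gr 0
  mul_mem : ∀ {i j : ℕ} {a b : A}, a ∈ gr i → b ∈ gr j → a * b ∈ gr (i + j)
  gcomm : ∀ {i j : ℕ} {a b : A}, a ∈ gr i → b ∈ gr j →
    a * b = ((-1 : ℚ) ^ (i * j)) • (b * a)
  d : A →ₗ[ℚ] A
  d_mem : ∀ {i : ℕ} {a : A}, a ∈ gr i → d a ∈ gr (i + 1)
  d_sq : ∀ a : A, d (d a) = 0
  leibniz : ∀ {i : ℕ} (a b : A), a ∈ gr i →
    d (a * b) = d a * b + ((-1 : ℚ) ^ i) • (a * d b)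

namespace CDGAStruct

variable {A : Type} [Ring A] [Algebra ℚ A]

/-- The grading of a CDGA extended to `ℤ` (zero in negative degrees). -/
def grZ (SA : CDGAStruct A) : ℤ → Submodule ℚ A :=
  fun j => if 0 ≤ j then SA.gr j.toNat else ⊥

/-- A CDGA is connected if `A⁰ = ℚ·1 ≅ ℚ`. -/
def Connected (SA : CDGAStruct A) : Prop :=
  ∀ a ∈ SA.gr 0, ∃! q : ℚ, a = q • (1 : A)

/-- A CDGA is of finite type if each graded piece is finite dimensional. -/
def FiniteType (SA : CDGAStruct A) : Prop :=
  ∀ i : ℕ, FiniteDimensional ℚ (SA.gr i)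

end CDGAStruct

/-- A morphism of CDGAs: a `ℚ`-linear map which is unital, multiplicative,
preserves the gradings and commutes with the differentials. -/
def IsCDGAHom {A B : Type} [Ring A] [Algebra ℚ A] [Ring B] [Algebra ℚ B]
    (SA : CDGAStruct A) (SB : CDGAStruct B) (f : A →ₗ[ℚ] B) : Prop :=
  f 1 = 1 ∧ (∀ a a' : A, f (a * a') = f a * f a') ∧
    (∀ i : ℕ, ∀ a ∈ SA.gr i, f a ∈ SB.gr i) ∧ ∀ a, f (SA.d a) = SB.d (f a)

/-- A differential graded module (`ℤ`-graded) over the CDGA `(A, SA)`. -/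
structure DGModStruct {A : Type} [Ring A] [Algebra ℚ A] (SA : CDGAStruct A)
    (M : Type) [AddCommGroup M] [Module ℚ M] : Type where
  gr : ℤ → Submodule ℚ M
  internal : DirectSum.IsInternal gr
  smul : A →ₗ[ℚ] M →ₗ[ℚ] M
  one_smul : ∀ m : M, smul 1 m = m
  mul_smul : ∀ (a b : A) (m : M), smul (a * b) m = smul a (smul b m)
  smul_mem : ∀ {i : ℕ} {j : ℤ} {a : A} {m : M},
    a ∈ SA.gr i → m ∈ gr j → smul a m ∈ gr (i + j)
  d : M →ₗ[ℚ] M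
  d_mem : ∀ {j : ℤ} {m : M}, m ∈ gr j → d m ∈ gr (j + 1)
  d_sq : ∀ m : M, d (d m) = 0
  leibniz : ∀ {i : ℕ} (a : A) (m : M), a ∈ SA.gr i →
    d (smul a m) = smul (SA.d a) m + ((-1 : ℚ) ^ i) • smul a (d m)

/-- `SM` is the tautological dg-module structure of a CDGA over itself. -/
def IsSelfMod {A : Type} [Ring A] [Algebra ℚ A] (SA : CDGAStruct A)
    (SM : DGModStruct SA A) : Prop :=
  (∀ j : ℤ, SM.gr j = SA.grZ j) ∧ (∀ a b : A, SM.smul a b = a * b) ∧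
    ∀ a : A, SM.d a = SA.d a

/-- `SMA` is the `A`-dg-module structure induced from the `B`-dg-module
structure `SMB` by restriction along the CDGA morphism `φ : A → B`. -/
def IsModViaHom {A B : Type} [Ring A] [Algebra ℚ A] [Ring B] [Algebra ℚ B]
    (SA : CDGAStruct A) (SB : CDGAStruct B) (φ : A →ₗ[ℚ] B)
    {M : Type} [AddCommGroup M] [Module ℚ M]
    (SMB : DGModStruct SB M) (SMA : DGModStruct SA M) : Prop :=
  (∀ j : ℤ, SMA.gr j = SMB.gr j) ∧ (∀ (a : A) (m : M), SMA.smul a m = SMB.smul (φ a) m) ∧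
    ∀ m : M, SMA.d m = SMB.d m

/-- A (degree `0`) morphism of dg-modules over a fixed CDGA. -/
def IsDGModHom {A : Type} [Ring A] [Algebra ℚ A] {SA : CDGAStruct A}
    {M N : Type} [AddCommGroup M] [Module ℚ M] [AddCommGroup N] [Module ℚ N]
    (SM : DGModStruct SA M) (SN : DGModStruct SA N) (f : M →ₗ[ℚ] N) : Prop :=
  (∀ j : ℤ, ∀ m ∈ SM.gr j, f m ∈ SN.gr j) ∧
    (∀ (a : A) (m : M), f (SM.smul a m) = SN.smul a (f m)) ∧
    ∀ m : M, f (SM.d m) = SN.d (f m)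

/-- A (degree `0`) morphism of `A`-dg-modules with target the CDGA `A` itself. -/
def IsDGHomToAlg {A : Type} [Ring A] [Algebra ℚ A] (SA : CDGAStruct A)
    {M : Type} [AddCommGroup M] [Module ℚ M]
    (SM : DGModStruct SA M) (f : M →ₗ[ℚ] A) : Prop :=
  (∀ j : ℤ, ∀ m ∈ SM.gr j, f m ∈ SA.grZ j) ∧
    (∀ (a : A) (m : M), f (SM.smul a m) = a * f m) ∧
    ∀ m : M, f (SM.d m) = SA.d (f m)

/-- An `A`-dg-module morphism `f : M → A` is balanced when `f(x)·y = x·f(y)`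
for all `x, y ∈ M`; here `x·f(y) = (-1)^{|x||f(y)|} f(y)·x` by the usual Koszul
sign rule, and `|f(y)| = |y|` since `f` has degree `0`. -/
def IsBalanced {A : Type} [Ring A] [Algebra ℚ A] (SA : CDGAStruct A)
    {M : Type} [AddCommGroup M] [Module ℚ M]
    (SM : DGModStruct SA M) (f : M →ₗ[ℚ] A) : Prop :=
  ∀ (i j : ℤ) (x y : M), x ∈ SM.gr i → y ∈ SM.gr j →
    SM.smul (f x) y = ((-1 : ℚ) ^ (i * j)) • SM.smul (f y) x

/-- `SD` realizes the shifted linear dual `s^{-n}#M` of the `A`-dg-module `M`: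
the structure carries a pairing `⟨-,-⟩ : D ⊗ M → ℚ` which vanishes except
between degrees `p` and `n - p`, is perfect in each degree, and satisfies
`⟨d f, x⟩ = -(-1)^{|f|} ⟨f, d x⟩` and `⟨a·f, x⟩ = (-1)^{|a||f|} ⟨f, a·x⟩`
(the standard dual dg-module structure `(a·f)(x) = (-1)^{|a||f|} f(a·x)` with
the dual differential). -/
structure DualRep {A : Type} [Ring A] [Algebra ℚ A] (SA : CDGAStruct A)
    {M : Type} [AddCommGroup M] [Module ℚ M] (SM : DGModStruct SA M) (n : ℤ)
    {D : Type} [AddCommGroup D] [Module ℚ D] (SD : DGModStruct SA D) : Type where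
  pair : D →ₗ[ℚ] M →ₗ[ℚ] ℚ
  pair_deg : ∀ {p q : ℤ} {f : D} {x : M}, f ∈ SD.gr p → x ∈ SM.gr q →
    p + q ≠ n → pair f x = 0
  nondeg : ∀ {p : ℤ} (f : D), f ∈ SD.gr p → (∀ x ∈ SM.gr (n - p), pair f x = 0) → f = 0
  surj : ∀ (p : ℤ) (φ : M →ₗ[ℚ] ℚ), ∃ f ∈ SD.gr p, ∀ x ∈ SM.gr (n - p), pair f x = φ x
  d_pair : ∀ {p : ℤ} (f : D) (x : M), f ∈ SD.gr p →
    pair (SD.d f) x = -(((-1 : ℚ) ^ p) * pair f (SM.d x))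
  smul_pair : ∀ {i : ℕ} {p : ℤ} (a : A) (f : D) (x : M), a ∈ SA.gr i → f ∈ SD.gr p →
    pair (SD.smul a f) x = ((-1 : ℚ) ^ ((i : ℤ) * p)) * pair f (SM.smul a x)

/-- A bundled dg-module over the CDGA `(A, SA)`. -/
structure DGMod {A : Type} [Ring A] [Algebra ℚ A] (SA : CDGAStruct A) : Type 1 where
  carrier : Type
  [acg : AddCommGroup carrier]
  [mod : Module ℚ carrier]
  str : DGModStruct SA carrier

attribute [instance] DGMod.acg DGMod.mod

/-- `SA` is a Poincaré duality CDGA in dimension `n`: it is connected, of finite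
type, and there is an isomorphism of `A`-dg-modules `θ : A ≅ s^{-n}#A`. -/
def IsPDCDGA {A : Type} [Ring A] [Algebra ℚ A] (SA : CDGAStruct A) (n : ℤ) : Prop :=
  SA.Connected ∧ SA.FiniteType ∧
    ∃ SAm : DGModStruct SA A, IsSelfMod SA SAm ∧
      ∃ (DM : DGMod SA) (_ : DualRep SA SAm n DM.str) (θ : A →ₗ[ℚ] DM.carrier),
        IsDGModHom SAm DM.str θ ∧ Function.Bijective θ

section Cohomology

variable {M N : Type} [AddCommGroup M] [Module ℚ M] [AddCommGroup N] [Module ℚ N]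

def IsCocycle (gr : ℤ → Submodule ℚ M) (d : M →ₗ[ℚ] M) (j : ℤ) (x : M) : Prop :=
  x ∈ gr j ∧ d x = 0

def IsCoboundary (gr : ℤ → Submodule ℚ M) (d : M →ₗ[ℚ] M) (j : ℤ) (x : M) : Prop :=
  ∃ y ∈ gr (j - 1), d y = x

/-- `H^j` vanishes: every cocycle of degree `j` is a coboundary. -/
def CohVanishAt (gr : ℤ → Submodule ℚ M) (d : M →ₗ[ℚ] M) (j : ℤ) : Prop :=
  ∀ x, IsCocycle gr d j x → IsCoboundary gr d j x

/-- The chain map `f` induces an isomorphism `H^j(M) → H^j(N)` (surjectivity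
and injectivity on cohomology classes in degree `j`). -/
def CohomIsoAt (grM : ℤ → Submodule ℚ M) (dM : M →ₗ[ℚ] M)
    (grN : ℤ → Submodule ℚ N) (dN : N →ₗ[ℚ] N) (f : M →ₗ[ℚ] N) (j : ℤ) : Prop :=
  (∀ y, IsCocycle grN dN j y →
    ∃ x, IsCocycle grM dM j x ∧ IsCoboundary grN dN j (f x - y)) ∧
  ∀ x, IsCocycle grM dM j x → IsCoboundary grN dN j (f x) → IsCoboundary grM dM j x

def IsQuasiIsoGr (grM : ℤ → Submodule ℚ M) (dM : M →ₗ[ℚ] M)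
    (grN : ℤ → Submodule ℚ N) (dN : N →ₗ[ℚ] N) (f : M →ₗ[ℚ] N) : Prop :=
  ∀ j : ℤ, CohomIsoAt grM dM grN dN f j

/-- The degree-`j` cohomology of a graded cochain complex, as a `ℚ`-module. -/
abbrev cohomologyAt (gr : ℤ → Submodule ℚ M) (d : M →ₗ[ℚ] M) (j : ℤ) : Type :=
  ↥(gr j ⊓ LinearMap.ker d) ⧸
    Submodule.comap (gr j ⊓ LinearMap.ker d).subtype (LinearMap.range d)

end Cohomology

/-- A quasi-isomorphism of CDGAs (on underlying linear maps). -/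
def IsQuasiIsoCDGA {A B : Type} [Ring A] [Algebra ℚ A] [Ring B] [Algebra ℚ B]
    (SA : CDGAStruct A) (SB : CDGAStruct B) (f : A →ₗ[ℚ] B) : Prop :=
  IsQuasiIsoGr SA.grZ SA.d SB.grZ SB.d f

/-- `H(A)` is a Poincaré duality algebra in dimension `n`: `H⁰ = ℚ`,
`H^{>n} = 0`, `dim H^n = 1` and the multiplication pairing
`H^k ⊗ H^{n-k} → H^n ≅ ℚ` is non-degenerate (expressed elementwise via a
linear functional `ε` representing evaluation against the fundamental class). -/
def CohomologyPD {A : Type} [Ring A] [Algebra ℚ A] (SA : CDGAStruct A) (n : ℕ) : Prop :=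
  (∀ a ∈ SA.gr 0, SA.d a = 0 → ∃ q : ℚ, a = q • (1 : A)) ∧
  (∀ j : ℤ, (n : ℤ) < j → CohVanishAt SA.grZ SA.d j) ∧
  ∃ ε : A →ₗ[ℚ] ℚ,
    (∀ i : ℕ, i ≠ n → ∀ a ∈ SA.gr i, ε a = 0) ∧
    (∀ a : A, ε (SA.d a) = 0) ∧
    (∃ a ∈ SA.gr n, SA.d a = 0 ∧ ε a = 1) ∧
    (∀ a ∈ SA.gr n, SA.d a = 0 → ε a = 0 → IsCoboundary SA.grZ SA.d (n : ℤ) a) ∧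
    ∀ i : ℕ, i ≤ n → ∀ a ∈ SA.gr i, SA.d a = 0 →
      ¬ IsCoboundary SA.grZ SA.d (i : ℤ) a →
        ∃ b ∈ SA.gr (n - i), SA.d b = 0 ∧ ε (a * b) ≠ 0

/-- `H(A)` is `1`-connected: `H⁰(A) = ℚ` and `H¹(A) = 0`. -/
def CohOneConnected {A : Type} [Ring A] [Algebra ℚ A] (SA : CDGAStruct A) : Prop :=
  (∀ a ∈ SA.gr 0, SA.d a = 0 → ∃ q : ℚ, a = q • (1 : A)) ∧
  ∀ a ∈ SA.gr 1, SA.d a = 0 → ∃ b ∈ SA.gr 0, SA.d b = a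

section Cone

variable {A : Type} [Ring A] [Algebra ℚ A] {M : Type} [AddCommGroup M] [Module ℚ M]

/-- The grading of the mapping cone `C(f) = A ⊕ sM` of a dg-module morphism
`f : M → A`:  `C(f)^p = A^p ⊕ (sM)^p = A^p ⊕ M^{p+1}`. -/
def coneGr (SA : CDGAStruct A) (SM : DGModStruct SA M) : ℤ → Submodule ℚ (A × M) :=
  fun p => (SA.grZ p).prod (SM.gr (p + 1))

/-- The differential of the mapping cone `C(f) = A ⊕_f sM`:
`δ(a, sm) = (d a + f m, -s (d m))`. -/
def coneD (SA : CDGAStruct A) (SM : DGModStruct SA M) (f : M →ₗ[ℚ] A) :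
    A × M →ₗ[ℚ] A × M :=
  (SA.d ∘ₗ LinearMap.fst ℚ A M + f ∘ₗ LinearMap.snd ℚ A M).prod
    (-(SM.d ∘ₗ LinearMap.snd ℚ A M))

/-- The semi-trivial product on the mapping cone `A ⊕ sM`: it is the unique
graded-commutative product extending the product of `A` and the `A`-module
structure of `sM` (with the Koszul sign `a·(sm) = (-1)^{|a|} s(a·m)`), and with
`(sm)·(sm') = 0`. -/
def SemiTrivialMul (SA : CDGAStruct A) (SM : DGModStruct SA M)
    (μ : A × M →ₗ[ℚ] A × M →ₗ[ℚ] A × M) : Prop :=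
  (∀ a a' : A, μ (a, 0) (a', 0) = (a * a', 0)) ∧
  (∀ (i : ℕ) (a : A) (m : M), a ∈ SA.gr i →
    μ (a, 0) (0, m) = (0, ((-1 : ℚ) ^ i) • SM.smul a m)) ∧
  (∀ (i : ℕ) (j : ℤ) (a : A) (m : M), a ∈ SA.gr i → m ∈ SM.gr j →
    μ (0, m) (a, 0) = (0, ((-1 : ℚ) ^ (j * (i : ℤ))) • SM.smul a m)) ∧
  ∀ m m' : M, μ (0, m) (0, m') = 0

end Cone

/-- The data `(gr, 1, μ, d)` on `C` is a (`ℤ`-graded) CDGA: internal grading,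
unital associative graded-commutative product, degree `+1` differential
squaring to zero and satisfying the Leibniz rule. -/
def IsGCDGA {C : Type} [AddCommGroup C] [Module ℚ C]
    (gr : ℤ → Submodule ℚ C) (one : C) (μ : C →ₗ[ℚ] C →ₗ[ℚ] C) (d : C →ₗ[ℚ] C) : Prop :=
  DirectSum.IsInternal gr ∧
  one ∈ gr 0 ∧
  (∀ x, μ one x = x) ∧ (∀ x, μ x one = x) ∧
  (∀ x y z : C, μ (μ x y) z = μ x (μ y z)) ∧
  (∀ (i j : ℤ) (x y : C), x ∈ gr i → y ∈ gr j → μ x y ∈ gr (i + j)) ∧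
  (∀ (i j : ℤ) (x y : C), x ∈ gr i → y ∈ gr j → μ x y = ((-1 : ℚ) ^ (i * j)) • μ y x) ∧
  (∀ j : ℤ, ∀ x ∈ gr j, d x ∈ gr (j + 1)) ∧
  (∀ x, d (d x) = 0) ∧
  ∀ (i : ℤ) (x y : C), x ∈ gr i → d (μ x y) = μ (d x) y + ((-1 : ℚ) ^ i) • μ x (d y)

/-- A morphism of (`ℤ`-graded) differential graded algebras presented by
`(grading, unit, product, differential)` data. -/
def IsGradedDGAHom {C D : Type} [AddCommGroup C] [Module ℚ C] [AddCommGroup D] [Module ℚ D]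
    (grC : ℤ → Submodule ℚ C) (oneC : C) (μC : C →ₗ[ℚ] C →ₗ[ℚ] C) (dC : C →ₗ[ℚ] C)
    (grD : ℤ → Submodule ℚ D) (oneD : D) (μD : D →ₗ[ℚ] D →ₗ[ℚ] D) (dD : D →ₗ[ℚ] D)
    (g : C →ₗ[ℚ] D) : Prop :=
  g oneC = oneD ∧ (∀ x y : C, g (μC x y) = μD (g x) (g y)) ∧
    (∀ j : ℤ, ∀ x ∈ grC j, g x ∈ grD j) ∧ ∀ x, g (dC x) = dD (g x)

/-- An orientation in degree `n` of a CDGA: a chain map `ε : A → s^{-n}ℚ`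
(i.e., `ε` is supported in degree `n` and kills boundaries) which is surjective
in cohomology. -/
def IsOrientation {A : Type} [Ring A] [Algebra ℚ A] (SA : CDGAStruct A) (n : ℕ)
    (ε : A →ₗ[ℚ] ℚ) : Prop :=
  (∀ i : ℕ, i ≠ n → ∀ a ∈ SA.gr i, ε a = 0) ∧ (∀ a : A, ε (SA.d a) = 0) ∧
    ∃ a ∈ SA.gr n, SA.d a = 0 ∧ ε a ≠ 0

/-- The orphan ideal `O(A, ε) = {a ∈ A | ∀ b, ε(a·b) = 0}` of an oriented CDGA. -/
def orphans {A : Type} [Ring A] [Algebra ℚ A] (_SA : CDGAStruct A) (ε : A →ₗ[ℚ] ℚ) :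
    Submodule ℚ A where
  carrier := { a : A | ∀ b : A, ε (a * b) = 0 }
  add_mem' := by
    intro a a' ha ha'
    intro b
    rw [add_mul, map_add, ha b, ha' b, add_zero]
  zero_mem' := by
    intro b
    rw [zero_mul, map_zero]
  smul_mem' := by
    intro c a ha
    intro b
    rw [smul_mul_assoc, map_smul, ha b, smul_zero]

/-- The orphan ideal is acyclic: it has vanishing cohomology in all degrees. -/
def OrphansAcyclic {A : Type} [Ring A] [Algebra ℚ A] (SA : CDGAStruct A)
    (ε : A →ₗ[ℚ] ℚ) : Prop :=
  ∀ (j : ℕ) (x : A), x ∈ orphans SA ε → x ∈ SA.gr j → SA.d x = 0 →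
    ∃ y ∈ orphans SA ε, y ∈ SA.gr (j - 1) ∧ SA.d y = x

/-- A (relative) Sullivan extension `(A, d) ↪ (Â = A ⊗ ΛV, d̂)`: an injective
CDGA morphism `inc : A → Â` together with a graded subspace `V ⊆ Â` of
generators such that `Â` is the free graded-commutative `A`-algebra on `V`
(expressed by the universal property), and `V` admits an exhaustive increasing
filtration `F 0 ⊆ F 1 ⊆ ⋯` with `d̂(F (k+1)) ⊆ A ⊗ ΛF k` and `d̂(F 0) ⊆ A`. -/
structure SullivanExtension {A Ahat : Type} [Ring A] [Algebra ℚ A]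
    [Ring Ahat] [Algebra ℚ Ahat]
    (SA : CDGAStruct A) (SH : CDGAStruct Ahat) : Type 1 where
  inc : A →ₗ[ℚ] Ahat
  hom : IsCDGAHom SA SH inc
  inj : Function.Injective inc
  V : ℕ → Submodule ℚ Ahat
  V_deg : ∀ i : ℕ, V i ≤ SH.gr i
  free : ∀ (B : Type) [Ring B] [Algebra ℚ B] (SB : CDGAStruct B) (g : A →ₗ[ℚ] B),
    g 1 = 1 → (∀ a a' : A, g (a * a') = g a * g a') →
    (∀ i : ℕ, ∀ a ∈ SA.gr i, g a ∈ SB.gr i) →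
    ∀ h : Ahat →ₗ[ℚ] B, (∀ i : ℕ, ∀ v ∈ V i, h v ∈ SB.gr i) →
    ∃! G : Ahat →ₗ[ℚ] B, G 1 = 1 ∧ (∀ x y : Ahat, G (x * y) = G x * G y) ∧
      (∀ i : ℕ, ∀ x ∈ SH.gr i, G x ∈ SB.gr i) ∧
      (∀ a : A, G (inc a) = g a) ∧ ∀ i : ℕ, ∀ v ∈ V i, G v = h v
  filt : ∃ F : ℕ → Submodule ℚ Ahat,
    (∀ k : ℕ, F k ≤ F (k + 1)) ∧ (∀ k : ℕ, F k ≤ ⨆ i, V i) ∧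
    ((⨆ i, V i) ≤ ⨆ k, F k) ∧
    (∀ v ∈ F 0, SH.d v ∈ Algebra.adjoin ℚ (Set.range inc)) ∧
    ∀ k : ℕ, ∀ v ∈ F (k + 1),
      SH.d v ∈ Algebra.adjoin ℚ (Set.range inc ∪ (F k : Set Ahat))

/-- A bundled CDGA over `ℚ`. -/
structure CDGA : Type 1 where
  carrier : Type
  [ring : Ring carrier]
  [alg : Algebra ℚ carrier]
  str : CDGAStruct carrier

attribute [instance] CDGA.ring CDGA.alg

/-- A bundled morphism of CDGAs. -/
structure CDGAMor : Type 1 where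
  src : CDGA
  tgt : CDGA
  map : src.carrier →ₗ[ℚ] tgt.carrier
  isHom : IsCDGAHom src.str tgt.str map

/-- One step of weak equivalence between CDGA morphisms: a commutative square
whose horizontal maps are quasi-isomorphisms of CDGAs. -/
def MorWeakEqStep (m m' : CDGAMor) : Prop :=
  ∃ (α : m.src.carrier →ₗ[ℚ] m'.src.carrier) (β : m.tgt.carrier →ₗ[ℚ] m'.tgt.carrier),
    IsCDGAHom m.src.str m'.src.str α ∧ IsQuasiIsoCDGA m.src.str m'.src.str α ∧
    IsCDGAHom m.tgt.str m'.tgt.str β ∧ IsQuasiIsoCDGA m.tgt.str m'.tgt.str β ∧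
    β ∘ₗ m.map = m'.map ∘ₗ α

/-- Two CDGA morphisms are weakly equivalent if they are connected by a finite
zigzag of commutative squares whose horizontal maps are quasi-isomorphisms. -/
def MorWeakEq : CDGAMor → CDGAMor → Prop := Relation.EqvGen MorWeakEqStep

/-- Two CDGAs are weakly equivalent if they are connected by a finite zigzag of
quasi-isomorphisms of CDGAs. -/
def CDGAWeakEq : CDGA → CDGA → Prop :=
  Relation.EqvGen fun X Y =>
    ∃ f : X.carrier →ₗ[ℚ] Y.carrier, IsCDGAHom X.str Y.str f ∧ IsQuasiIsoCDGA X.str Y.str f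

end


section AuxiliaryForStatement0

variable {A M : Type} [Ring A] [Algebra ℚ A] [AddCommGroup M] [Module ℚ M]

lemma sgn_congr' {m n : ℤ} (k : ℤ) (h : m = n + 2 * k) : (-1 : ℚ) ^ m = (-1 : ℚ) ^ n := by
  subst h
  rw [zpow_add₀ (by norm_num : (-1 : ℚ) ≠ 0), zpow_mul]
  norm_num

lemma grZ_natCast' (SA : CDGAStruct A) (i : ℕ) : SA.grZ (i : ℤ) = SA.gr i := by
  simp [CDGAStruct.grZ]

lemma grZ_cases' (SA : CDGAStruct A) {p : ℤ} {a : A} (h : a ∈ SA.grZ p) :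
    a = 0 ∨ (0 ≤ p ∧ a ∈ SA.gr p.toNat) := by
  by_cases hp : 0 ≤ p
  · right; refine ⟨hp, ?_⟩; simpa [CDGAStruct.grZ, hp] using h
  · left; simpa [CDGAStruct.grZ, hp] using h

lemma A_ind' (SA : CDGAStruct A) (P : A → Prop) (h0 : P 0)
    (hadd : ∀ x y, P x → P y → P (x + y))
    (hhom : ∀ (i : ℕ), ∀ a ∈ SA.gr i, P a) : ∀ a, P a := by
  intro a
  have htop : (⨆ i, SA.gr i) = ⊤ :=
    ((DirectSum.isInternal_submodule_iff_iSupIndep_and_iSup_eq_top _).mp SA.internal).2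
  have : a ∈ (⨆ i, SA.gr i) := htop ▸ Submodule.mem_top
  exact Submodule.iSup_induction (motive := P) _ this hhom h0 hadd

lemma M_ind' {SA : CDGAStruct A} (SM : DGModStruct SA M) (P : M → Prop) (h0 : P 0)
    (hadd : ∀ x y, P x → P y → P (x + y))
    (hhom : ∀ (j : ℤ), ∀ m ∈ SM.gr j, P m) : ∀ m, P m := by
  intro m
  have htop : (⨆ j, SM.gr j) = ⊤ :=
    ((DirectSum.isInternal_submodule_iff_iSupIndep_and_iSup_eq_top _).mp SM.internal).2
  have : m ∈ (⨆ j, SM.gr j) := htop ▸ Submodule.mem_top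
  exact Submodule.iSup_induction (motive := P) _ this hhom h0 hadd

lemma cone_ind' (SA : CDGAStruct A) (SM : DGModStruct SA M) (P : A × M → Prop)
    (h0 : P 0) (hadd : ∀ x y, P x → P y → P (x + y))
    (hA : ∀ (i : ℕ), ∀ a ∈ SA.gr i, P (a, 0))
    (hM : ∀ (j : ℤ), ∀ m ∈ SM.gr j, P (0, m)) : ∀ x, P x := by
  intro x
  have h1 : P (x.1, 0) := by
    refine A_ind' SA (fun a => P (a, 0)) (by exact h0) ?_ hA x.1
    intro u v hu hv
    have := hadd _ _ hu hv
    simpa using this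
  have h2 : P (0, x.2) := by
    refine M_ind' SM (fun m => P (0, m)) (by exact h0) ?_ hM x.2
    intro u v hu hv
    have := hadd _ _ hu hv
    simpa using this
  have := hadd _ _ h1 h2
  simpa using this

end AuxiliaryForStatement0

/-- Let `A` be a CDGA over `ℚ`, `M` an `A`-dgmodule, and
`f : M → A` a morphism of `A`-dgmodules that is balanced, i.e.
`f(x)·y = x·f(y)` for all `x, y ∈ M`. Then the mapping cone `C(f) = A ⊕_f sM`,
equipped with the semi-trivial graded-commutative product, is a CDGA; in
particular its differential `δ(a, sm) = (d_A(a) + f(m), -s d_M(m))` satisfies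
the Leibniz rule with respect to this product. -/
theorem statement0 {A M : Type} [Ring A] [Algebra ℚ A] [AddCommGroup M] [Module ℚ M]
    (SA : CDGAStruct A) (SM : DGModStruct SA M)
    (f : M →ₗ[ℚ] A) (hf : IsDGHomToAlg SA SM f)
    (hbal : IsBalanced SA SM f)
    (μ : A × M →ₗ[ℚ] A × M →ₗ[ℚ] A × M) (hμ : SemiTrivialMul SA SM μ) :
    IsGCDGA (coneGr SA SM) ((1 : A), (0 : M)) μ (coneD SA SM f) := by
  obtain ⟨hfdeg, hfsm, hfd⟩ := hf
  obtain ⟨hAA, hAM0, hMA0, hMM⟩ := hμ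
  have hmem : ∀ {p : ℤ} {x : A × M},
      x ∈ coneGr SA SM p ↔ (x.1 ∈ SA.grZ p ∧ x.2 ∈ SM.gr (p + 1)) :=
    fun {p x} => Submodule.mem_prod
  have hD : ∀ (a : A) (m : M), coneD SA SM f (a, m) = (SA.d a + f m, -(SM.d m)) :=
    fun a m => rfl
  have hAM : ∀ (i : ℕ) (a : A) (m : M), a ∈ SA.gr i →
      μ (a, 0) (0, m) = (0, ((-1 : ℚ) ^ (i : ℤ)) • SM.smul a m) := by
    intro i a m ha
    rw [hAM0 i a m ha, ← zpow_natCast (-1 : ℚ) i]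
  have hMA : ∀ (i : ℕ) (j : ℤ) (a : A) (m : M), a ∈ SA.gr i → m ∈ SM.gr j →
      μ (0, m) (a, 0) = (0, ((-1 : ℚ) ^ (j * (i : ℤ))) • SM.smul a m) :=
    hMA0
  -- scalar versions
  have hsmul1 : ∀ (c : ℚ) (x y : A × M), μ (c • x) y = c • μ x y := by
    intro c x y; rw [map_smul]; rfl
  have hsmul2 : ∀ (c : ℚ) (x y : A × M), μ x (c • y) = c • μ x y := by
    intro c x y; rw [map_smul]
  have hpk : ∀ (c : ℚ) (m : M), ((0 : A), c • m) = c • ((0 : A), m) := by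
    intro c m; simp
  have hz : ((0 : A), (0 : M)) = (0 : A × M) := rfl
  have hMM' : ∀ (w : A × M), w.1 = 0 → ∀ (m'' : M), μ w ((0 : A), m'') = 0 := by
    intro w hw m''
    have hww : w = ((0 : A), w.2) := Prod.ext_iff.mpr ⟨hw, rfl⟩
    rw [hww, hMM]
  have hsg : ∀ p q : ℤ, (-1 : ℚ) ^ p * (-1 : ℚ) ^ q = (-1 : ℚ) ^ (p + q) :=
    fun p q => (zpow_add₀ (by norm_num) p q).symm
  have hfst : ∀ (m : M) (z : A × M), (μ ((0 : A), m) z).1 = 0 := by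
    refine M_ind' SM (fun m => ∀ z, (μ ((0 : A), m) z).1 = 0) ?_ ?_ ?_
    · intro z; rw [hz, map_zero]; rfl
    · intro u v hu hv z
      have h2 : ((0 : A), u + v) = ((0 : A), u) + ((0 : A), v) := by simp
      rw [h2, map_add, LinearMap.add_apply, Prod.fst_add, hu z, hv z, add_zero]
    · intro j m hm
      refine cone_ind' SA SM (fun z => (μ ((0 : A), m) z).1 = 0) ?_ ?_ ?_ ?_
      · show (μ ((0 : A), m) 0).1 = 0
        rw [map_zero]; rfl
      · intro x y hx hy; rw [map_add, Prod.fst_add, hx, hy, add_zero]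
      · intro i a ha; rw [hMA i j a m ha hm]
      · intro j' m' hm'; rw [hMM m m']; rfl
  refine ⟨?_, ?_, ?_, ?_, ?_, ?_, ?_, ?_, ?_, ?_⟩
  · -- internal
    rw [DirectSum.isInternal_submodule_iff_iSupIndep_and_iSup_eq_top]
    have hindA : iSupIndep SA.gr :=
      ((DirectSum.isInternal_submodule_iff_iSupIndep_and_iSup_eq_top _).mp SA.internal).1
    have hindM : iSupIndep SM.gr :=
      ((DirectSum.isInternal_submodule_iff_iSupIndep_and_iSup_eq_top _).mp SM.internal).1
    constructor
    · intro p
      have hub : (⨆ (q : ℤ) (_ : q ≠ p), coneGr SA SM q) ≤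
          (⨆ (q : ℤ) (_ : q ≠ p), SA.grZ q).prod (⨆ (q : ℤ) (_ : q ≠ p), SM.gr (q + 1)) := by
        refine iSup₂_le fun q hq => ?_
        exact Submodule.prod_mono (le_iSup₂ (f := fun (q : ℤ) (_ : q ≠ p) => SA.grZ q) q hq)
          (le_iSup₂ (f := fun (q : ℤ) (_ : q ≠ p) => SM.gr (q + 1)) q hq)
      have hdA : Disjoint (SA.grZ p) (⨆ (q : ℤ) (_ : q ≠ p), SA.grZ q) := by
        by_cases hp : 0 ≤ p
        · have hub2 : (⨆ (q : ℤ) (_ : q ≠ p), SA.grZ q) ≤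
              ⨆ (n : ℕ) (_ : n ≠ p.toNat), SA.gr n := by
            refine iSup₂_le fun q hq => ?_
            by_cases hq0 : 0 ≤ q
            · have hne : q.toNat ≠ p.toNat := by omega
              have heq : SA.grZ q = SA.gr q.toNat := by simp [CDGAStruct.grZ, hq0]
              rw [heq]
              exact le_iSup₂ (f := fun (n : ℕ) (_ : n ≠ p.toNat) => SA.gr n) q.toNat hne
            · have heq : SA.grZ q = ⊥ := by simp [CDGAStruct.grZ, hq0]
              rw [heq]; exact bot_le
          have heq : SA.grZ p = SA.gr p.toNat := by simp [CDGAStruct.grZ, hp]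
          rw [heq]
          exact (hindA p.toNat).mono_right hub2
        · have heq : SA.grZ p = ⊥ := by simp [CDGAStruct.grZ, hp]
          rw [heq]; exact disjoint_bot_left
      have hdM : Disjoint (SM.gr (p + 1)) (⨆ (q : ℤ) (_ : q ≠ p), SM.gr (q + 1)) := by
        have hub2 : (⨆ (q : ℤ) (_ : q ≠ p), SM.gr (q + 1)) ≤
            ⨆ (r : ℤ) (_ : r ≠ p + 1), SM.gr r := by
          refine iSup₂_le fun q hq => ?_
          exact le_iSup₂ (f := fun (r : ℤ) (_ : r ≠ p + 1) => SM.gr r) (q + 1) (by omega)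
        exact (hindM (p + 1)).mono_right hub2
      refine Disjoint.mono_right hub ?_
      rw [Submodule.disjoint_def]
      intro x hx1 hx2
      obtain ⟨ha1, hm1⟩ := hmem.mp hx1
      obtain ⟨ha2, hm2⟩ := Submodule.mem_prod.mp hx2
      have e1 : x.1 = 0 := (Submodule.disjoint_def.mp hdA) _ ha1 ha2
      have e2 : x.2 = 0 := (Submodule.disjoint_def.mp hdM) _ hm1 hm2
      exact Prod.ext_iff.mpr ⟨e1, e2⟩
    · rw [eq_top_iff]
      rintro x -
      have h1 : ∀ a : A, ((a, (0 : M)) : A × M) ∈ ⨆ p, coneGr SA SM p := by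
        refine A_ind' SA (fun a => ((a, (0 : M)) : A × M) ∈ ⨆ p, coneGr SA SM p) ?_ ?_ ?_
        · show (((0 : A), (0 : M)) : A × M) ∈ ⨆ p, coneGr SA SM p
          rw [hz]; exact zero_mem _
        · intro u v hu hv
          have := add_mem hu hv
          simpa using this
        · intro i a ha
          refine Submodule.mem_iSup_of_mem (i : ℤ) (hmem.mpr ⟨?_, zero_mem _⟩)
          rw [grZ_natCast']; exact ha
      have h2 : ∀ m : M, (((0 : A), m) : A × M) ∈ ⨆ p, coneGr SA SM p := by
        refine M_ind' SM (fun m => (((0 : A), m) : A × M) ∈ ⨆ p, coneGr SA SM p) ?_ ?_ ?_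
        · show (((0 : A), (0 : M)) : A × M) ∈ ⨆ p, coneGr SA SM p
          rw [hz]; exact zero_mem _
        · intro u v hu hv
          have := add_mem hu hv
          simpa using this
        · intro j m hm
          refine Submodule.mem_iSup_of_mem (j - 1) (hmem.mpr ⟨zero_mem _, ?_⟩)
          have he : j - 1 + 1 = j := by omega
          rw [he]; exact hm
      have := add_mem (h1 x.1) (h2 x.2)
      simpa using this
  · -- one mem
    refine hmem.mpr ⟨?_, zero_mem _⟩
    rw [show (0 : ℤ) = ((0 : ℕ) : ℤ) from rfl, grZ_natCast']
    exact SA.one_mem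
  · -- one_mul
    intro x
    have hx : x = ((x.1, 0) : A × M) + (0, x.2) := by simp
    rw [hx, map_add, hAA 1 x.1, hAM 0 1 x.2 SA.one_mem]
    simp [SM.one_smul]
  · -- mul_one
    intro x
    have key : ∀ m : M, μ ((0 : A), m) ((1 : A), (0 : M)) = (0, m) := by
      refine M_ind' SM (fun m => μ ((0 : A), m) ((1 : A), (0 : M)) = (0, m)) ?_ ?_ ?_
      · show μ ((0 : A), (0 : M)) ((1 : A), (0 : M)) = ((0 : A), (0 : M))
        rw [hz, map_zero]; rfl
      · intro u v hu hv
        have h2 : ((0 : A), u + v) = ((0 : A), u) + ((0 : A), v) := by simp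
        rw [h2, map_add, LinearMap.add_apply, hu, hv]
      · intro j m hm
        rw [hMA 0 j 1 m SA.one_mem hm]
        simp [SM.one_smul]
    have hx : x = ((x.1, 0) : A × M) + (0, x.2) := by simp
    rw [hx, map_add, LinearMap.add_apply, hAA x.1 1, key x.2, mul_one]
  · -- assoc
    refine cone_ind' SA SM (fun x => ∀ y z, μ (μ x y) z = μ x (μ y z)) ?_ ?_ ?_ ?_
    · intro y z; simp
    · intro u v hu hv y z
      simp only [map_add, LinearMap.add_apply]
      rw [hu, hv]
    · intro i a ha
      refine cone_ind' SA SM (fun y => ∀ z, μ (μ (a, 0) y) z = μ (a, 0) (μ y z)) ?_ ?_ ?_ ?_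
      · intro z; simp
      · intro u v hu hv z
        simp only [map_add, LinearMap.add_apply]
        rw [hu, hv]
      · intro i' a' ha'
        refine cone_ind' SA SM
          (fun z => μ (μ (a, 0) ((a', 0) : A × M)) z = μ (a, 0) (μ ((a', 0) : A × M) z))
          ?_ ?_ ?_ ?_
        · simp
        · intro u v hu hv
          simp only [map_add]
          rw [hu, hv]
        · intro i'' a'' ha''
          show μ (μ (a, 0) ((a', 0) : A × M)) (a'', 0) = μ (a, 0) (μ ((a', 0) : A × M) (a'', 0))
          rw [hAA, hAA, hAA, hAA, mul_assoc]
        · intro j'' m'' hm''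
          show μ (μ (a, 0) ((a', 0) : A × M)) ((0 : A), m'')
            = μ (a, 0) (μ ((a', 0) : A × M) ((0 : A), m''))
          conv_lhs => rw [hAA, hAM (i + i') (a * a') m'' (SA.mul_mem ha ha')]
          conv_rhs => rw [hAM i' a' m'' ha', hpk, hsmul2, hAM i a _ ha]
          simp only [Prod.smul_mk, smul_zero, smul_smul, SM.mul_smul]
          rw [Prod.mk.injEq]
          refine ⟨rfl, ?_⟩
          congr 1
          simp only [hsg]
          refine sgn_congr' 0 ?_
          push_cast
          ring
      · intro j' m' hm'
        refine cone_ind' SA SM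
          (fun z => μ (μ (a, 0) (((0 : A), m') : A × M)) z
            = μ (a, 0) (μ (((0 : A), m') : A × M) z)) ?_ ?_ ?_ ?_
        · simp
        · intro u v hu hv
          simp only [map_add]
          rw [hu, hv]
        · intro i'' a'' ha''
          show μ (μ (a, 0) (((0 : A), m') : A × M)) (a'', 0)
            = μ (a, 0) (μ (((0 : A), m') : A × M) (a'', 0))
          conv_lhs => rw [hAM i a m' ha, hpk, hsmul1,
            hMA i'' ((i : ℤ) + j') a'' (SM.smul a m') ha'' (SM.smul_mem ha hm')]
          conv_rhs => rw [hMA i'' j' a'' m' ha'' hm', hpk, hsmul2, hAM i a _ ha]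
          have hc : SM.smul a'' (SM.smul a m') =
              ((-1 : ℚ) ^ ((i'' * i : ℕ) : ℤ)) • SM.smul a (SM.smul a'' m') := by
            rw [← SM.mul_smul, SA.gcomm ha'' ha, ← zpow_natCast (-1 : ℚ) (i'' * i)]
            rw [map_smul, LinearMap.smul_apply, SM.mul_smul]
          rw [hc]
          simp only [Prod.smul_mk, smul_zero, smul_smul]
          rw [Prod.mk.injEq]
          refine ⟨rfl, ?_⟩
          congr 1
          simp only [hsg]
          refine sgn_congr' ((i : ℤ) * i'') ?_
          push_cast
          ring
        · intro j'' m'' hm''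
          show μ (μ (a, 0) (((0 : A), m') : A × M)) ((0 : A), m'')
            = μ (a, 0) (μ (((0 : A), m') : A × M) ((0 : A), m''))
          conv_lhs => rw [hAM i a m' ha, hpk, hsmul1, hMM]
          conv_rhs => rw [hMM m' m'', map_zero]
          rw [smul_zero]
    · intro j m hm
      refine cone_ind' SA SM (fun y => ∀ z, μ (μ ((0 : A), m) y) z = μ ((0 : A), m) (μ y z))
        ?_ ?_ ?_ ?_
      · intro z; simp
      · intro u v hu hv z
        simp only [map_add, LinearMap.add_apply]
        rw [hu, hv]
      · intro i' a' ha'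
        refine cone_ind' SA SM
          (fun z => μ (μ ((0 : A), m) ((a', 0) : A × M)) z
            = μ ((0 : A), m) (μ ((a', 0) : A × M) z)) ?_ ?_ ?_ ?_
        · simp
        · intro u v hu hv
          simp only [map_add]
          rw [hu, hv]
        · intro i'' a'' ha''
          show μ (μ ((0 : A), m) ((a', 0) : A × M)) (a'', 0)
            = μ ((0 : A), m) (μ ((a', 0) : A × M) (a'', 0))
          conv_lhs => rw [hMA i' j a' m ha' hm, hpk, hsmul1,
            hMA i'' ((i' : ℤ) + j) a'' (SM.smul a' m) ha'' (SM.smul_mem ha' hm)]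
          conv_rhs => rw [hAA, hMA (i' + i'') j (a' * a'') m (SA.mul_mem ha' ha'') hm]
          have hc : SM.smul a'' (SM.smul a' m) =
              ((-1 : ℚ) ^ ((i'' * i' : ℕ) : ℤ)) • SM.smul (a' * a'') m := by
            rw [← SM.mul_smul, SA.gcomm ha'' ha', ← zpow_natCast (-1 : ℚ) (i'' * i')]
            rw [map_smul, LinearMap.smul_apply]
          rw [hc]
          simp only [Prod.smul_mk, smul_zero, smul_smul]
          rw [Prod.mk.injEq]
          refine ⟨rfl, ?_⟩
          congr 1
          simp only [hsg]
          refine sgn_congr' ((i' : ℤ) * i'') ?_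
          push_cast
          ring
        · intro j'' m'' hm''
          show μ (μ ((0 : A), m) ((a', 0) : A × M)) ((0 : A), m'')
            = μ ((0 : A), m) (μ ((a', 0) : A × M) ((0 : A), m''))
          conv_lhs => rw [hMA i' j a' m ha' hm, hpk, hsmul1, hMM]
          conv_rhs => rw [hAM i' a' m'' ha', hpk, hsmul2, hMM]
          rw [smul_zero, smul_zero]
      · intro j' m' hm'
        intro z
        show μ (μ ((0 : A), m) (((0 : A), m') : A × M)) z
          = μ ((0 : A), m) (μ (((0 : A), m') : A × M) z)
        rw [hMM m m', map_zero, LinearMap.zero_apply]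
        have hw : μ ((0 : A), m') z = ((0 : A), (μ ((0 : A), m') z).2) :=
          Prod.ext_iff.mpr ⟨hfst m' z, rfl⟩
        rw [hw, hMM]
  · -- grading of mul
    intro i j x y hx hy
    obtain ⟨hx1', hx2'⟩ := hmem.mp hx
    obtain ⟨hy1', hy2'⟩ := hmem.mp hy
    have hx1 : x.1 ∈ SA.grZ i := hx1'
    have hx2 : x.2 ∈ SM.gr (i + 1) := hx2'
    have hy1 : y.1 ∈ SA.grZ j := hy1'
    have hy2 : y.2 ∈ SM.gr (j + 1) := hy2'
    have hxx : x = ((x.1, 0) : A × M) + (0, x.2) := by simp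
    have hyy : y = ((y.1, 0) : A × M) + (0, y.2) := by simp
    rw [hxx, hyy]
    simp only [map_add, LinearMap.add_apply]
    refine add_mem (add_mem ?_ ?_) (add_mem ?_ ?_)
    · rw [hAA]
      refine hmem.mpr ⟨?_, zero_mem _⟩
      rcases grZ_cases' SA hx1 with h | ⟨hi, h⟩
      · rw [h, zero_mul]; exact zero_mem _
      rcases grZ_cases' SA hy1 with h' | ⟨hj, h'⟩
      · rw [h', mul_zero]; exact zero_mem _
      have he : ((i.toNat + j.toNat : ℕ) : ℤ) = i + j := by omega
      rw [← he, grZ_natCast']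
      exact SA.mul_mem h h'
    · rcases grZ_cases' SA hy1 with h | ⟨hj, h⟩
      · rw [h, hMM]; exact zero_mem _
      · rw [hMA j.toNat (i + 1) y.1 x.2 h hx2]
        refine hmem.mpr ⟨zero_mem _, ?_⟩
        have hmm := SM.smul_mem h hx2
        rw [show ((j.toNat : ℤ) + (i + 1)) = i + j + 1 by omega] at hmm
        exact Submodule.smul_mem _ _ hmm
    · rcases grZ_cases' SA hx1 with h | ⟨hi, h⟩
      · rw [h, hz, map_zero, LinearMap.zero_apply]; exact zero_mem _
      · rw [hAM i.toNat x.1 y.2 h]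
        refine hmem.mpr ⟨zero_mem _, ?_⟩
        have hmm := SM.smul_mem h hy2
        rw [show ((i.toNat : ℤ) + (j + 1)) = i + j + 1 by omega] at hmm
        exact Submodule.smul_mem _ _ hmm
    · rw [hMM]; exact zero_mem _
  · -- gcomm
    intro i j x y hx hy
    obtain ⟨hx1', hx2'⟩ := hmem.mp hx
    obtain ⟨hy1', hy2'⟩ := hmem.mp hy
    have hx1 : x.1 ∈ SA.grZ i := hx1'
    have hx2 : x.2 ∈ SM.gr (i + 1) := hx2'
    have hy1 : y.1 ∈ SA.grZ j := hy1'
    have hy2 : y.2 ∈ SM.gr (j + 1) := hy2'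
    have hxx : x = ((x.1, 0) : A × M) + (0, x.2) := by simp
    have hyy : y = ((y.1, 0) : A × M) + (0, y.2) := by simp
    have e1 : μ (x.1, 0) ((y.1, 0) : A × M) = ((-1 : ℚ) ^ (i * j)) • μ (y.1, 0) (x.1, 0) := by
      rw [hAA, hAA]
      rcases grZ_cases' SA hx1 with h | ⟨hi, h⟩
      · rw [h, zero_mul, mul_zero]; simp
      rcases grZ_cases' SA hy1 with h' | ⟨hj, h'⟩
      · rw [h', zero_mul, mul_zero]; simp
      rw [SA.gcomm h h']
      have hsgn : ((-1 : ℚ) ^ (i.toNat * j.toNat : ℕ)) = (-1 : ℚ) ^ (i * j) := by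
        rw [← zpow_natCast]
        congr 1
        push_cast
        rw [Int.toNat_of_nonneg hi, Int.toNat_of_nonneg hj]
      rw [hsgn]
      simp
    have e2 : μ (x.1, 0) (((0 : A), y.2) : A × M)
        = ((-1 : ℚ) ^ (i * j)) • μ ((0 : A), y.2) (x.1, 0) := by
      rcases grZ_cases' SA hx1 with h | ⟨hi, h⟩
      · rw [h, hz]; simp
      · rw [hAM i.toNat x.1 y.2 h, hMA i.toNat (j + 1) x.1 y.2 h hy2,
          Int.toNat_of_nonneg hi]
        rw [Prod.smul_mk, smul_zero, smul_smul]
        refine Prod.ext_iff.mpr ⟨rfl, ?_⟩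
        have hs : (-1 : ℚ) ^ (i * j) * (-1 : ℚ) ^ ((j + 1) * i) = (-1 : ℚ) ^ i := by
          rw [← zpow_add₀ (by norm_num : (-1 : ℚ) ≠ 0)]
          exact sgn_congr' (i * j) (by ring)
        rw [hs]
    have e3 : μ ((0 : A), x.2) ((y.1, 0) : A × M)
        = ((-1 : ℚ) ^ (i * j)) • μ (y.1, 0) ((0 : A), x.2) := by
      rcases grZ_cases' SA hy1 with h | ⟨hj, h⟩
      · rw [h, hz]; simp
      · rw [hMA j.toNat (i + 1) y.1 x.2 h hx2, hAM j.toNat y.1 x.2 h,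
          Int.toNat_of_nonneg hj]
        rw [Prod.smul_mk, smul_zero, smul_smul]
        refine Prod.ext_iff.mpr ⟨rfl, ?_⟩
        have hs : (-1 : ℚ) ^ (i * j) * (-1 : ℚ) ^ j = (-1 : ℚ) ^ ((i + 1) * j) := by
          rw [← zpow_add₀ (by norm_num : (-1 : ℚ) ≠ 0)]
          exact sgn_congr' 0 (by ring)
        rw [hs]
    have e4 : μ ((0 : A), x.2) (((0 : A), y.2) : A × M)
        = ((-1 : ℚ) ^ (i * j)) • μ ((0 : A), y.2) ((0 : A), x.2) := by
      rw [hMM, hMM, smul_zero]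
    rw [hxx, hyy]
    simp only [map_add, LinearMap.add_apply, smul_add]
    rw [e1, e2, e3, e4]
    abel
  · -- d mem
    intro j x hx
    obtain ⟨a, m⟩ := x
    obtain ⟨h1', h2'⟩ := hmem.mp hx
    have h1 : a ∈ SA.grZ j := h1'
    have h2 : m ∈ SM.gr (j + 1) := h2'
    rw [hD]
    refine hmem.mpr ⟨?_, neg_mem (SM.d_mem h2)⟩
    refine add_mem ?_ (hfdeg _ _ h2)
    rcases grZ_cases' SA h1 with h | ⟨hj, h⟩
    · rw [h, map_zero]; exact zero_mem _
    · have he : ((j.toNat + 1 : ℕ) : ℤ) = j + 1 := by omega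
      rw [← he, grZ_natCast']
      exact SA.d_mem h
  · -- d squared
    intro x
    obtain ⟨a, m⟩ := x
    rw [hD, hD]
    simp [map_add, map_neg, SA.d_sq, SM.d_sq, hfd, Prod.ext_iff]
  · -- leibniz
    intro i x y hx
    obtain ⟨hx1', hx2'⟩ := hmem.mp hx
    have hx1 : x.1 ∈ SA.grZ i := hx1'
    have hx2 : x.2 ∈ SM.gr (i + 1) := hx2'
    have hxx : x = ((x.1, 0) : A × M) + (0, x.2) := by simp
    have hdA0 : ∀ b : A, coneD SA SM f (b, (0 : M)) = (SA.d b, (0 : M)) := by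
      intro b; rw [hD]; simp
    have hdM0 : ∀ w : M, coneD SA SM f ((0 : A), w) = (f w, -(SM.d w)) := by
      intro w; rw [hD]; simp
    have main1 : ∀ y, coneD SA SM f (μ (x.1, 0) y)
        = μ (coneD SA SM f (x.1, 0)) y + ((-1 : ℚ) ^ i) • μ (x.1, 0) (coneD SA SM f y) := by
      rcases grZ_cases' SA hx1 with h | ⟨hi0, h⟩
      · intro y; rw [h, hz]; simp
      · have hsi : ((-1 : ℚ) ^ (i.toNat : ℕ)) = (-1 : ℚ) ^ i := by
          rw [← zpow_natCast (-1 : ℚ) i.toNat, Int.toNat_of_nonneg hi0]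
        have hsi' : ((-1 : ℚ) ^ ((i.toNat : ℤ))) = (-1 : ℚ) ^ i := by
          rw [Int.toNat_of_nonneg hi0]
        refine cone_ind' SA SM (fun y => coneD SA SM f (μ (x.1, 0) y)
          = μ (coneD SA SM f (x.1, 0)) y + ((-1 : ℚ) ^ i) • μ (x.1, 0) (coneD SA SM f y))
          ?_ ?_ ?_ ?_
        · simp
        · intro u v hu hv
          simp only [map_add, LinearMap.add_apply, smul_add]
          rw [hu, hv]
          abel
        · intro i' a' ha'
          show coneD SA SM f (μ (x.1, 0) ((a', 0) : A × M))
            = μ (coneD SA SM f (x.1, 0)) ((a', 0) : A × M)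
              + ((-1 : ℚ) ^ i) • μ (x.1, 0) (coneD SA SM f ((a', 0) : A × M))
          conv_lhs => rw [hAA, hdA0, SA.leibniz x.1 a' h]
          conv_rhs => rw [hdA0, hdA0, hAA, hAA]
          simp only [Prod.smul_mk, smul_zero, Prod.mk_add_mk, add_zero, hsi]
        · intro j' m' hm'
          show coneD SA SM f (μ (x.1, 0) (((0 : A), m') : A × M))
            = μ (coneD SA SM f (x.1, 0)) (((0 : A), m') : A × M)
              + ((-1 : ℚ) ^ i) • μ (x.1, 0) (coneD SA SM f (((0 : A), m') : A × M))
          have hsplit : ((f m', -(SM.d m')) : A × M) = (f m', 0) + ((0 : A), -(SM.d m')) := by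
            simp
          have hneg : (((0 : A), -(SM.d m')) : A × M) = -(((0 : A), SM.d m') : A × M) := by
            simp
          conv_lhs => rw [hAM i.toNat x.1 m' h, hpk, map_smul, hdM0, hfsm,
            SM.leibniz x.1 m' h]
          conv_rhs => rw [hdA0, hdM0, hAM (i.toNat + 1) (SA.d x.1) m' (SA.d_mem h),
            hsplit, map_add, hAA, hneg, map_neg, hAM i.toNat x.1 (SM.d m') h]
          simp only [Prod.smul_mk, smul_zero, Prod.mk_add_mk, Prod.neg_mk, smul_neg,
            smul_add, smul_smul, hsi, hsi', add_zero, zero_add, neg_zero, neg_neg, hsg]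
          have h2i : ((-1 : ℚ)) ^ (i + i) = 1 := Even.neg_one_zpow ⟨i, rfl⟩
          have e1 : ((-1 : ℚ)) ^ (((i.toNat + 1 : ℕ)) : ℤ) = -((-1 : ℚ) ^ i) := by
            rw [show (((i.toNat + 1 : ℕ)) : ℤ) = i + 1 by omega,
              zpow_add₀ (by norm_num : (-1 : ℚ) ≠ 0)]
            simp
          rw [h2i, e1, one_smul, Prod.mk.injEq]
          exact ⟨rfl, by rw [neg_add, neg_smul]⟩
    have main2 : ∀ y, coneD SA SM f (μ ((0 : A), x.2) y)
        = μ (coneD SA SM f ((0 : A), x.2)) y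
          + ((-1 : ℚ) ^ i) • μ ((0 : A), x.2) (coneD SA SM f y) := by
      have hfx2 : f x.2 ∈ SA.grZ (i + 1) := hfdeg (i + 1) x.2 hx2
      have hdx2m : SM.d x.2 ∈ SM.gr (i + 2) := by
        have := SM.d_mem hx2
        rwa [show (i + 1 + 1 : ℤ) = i + 2 by ring] at this
      have hsplit2 : ((f x.2, -(SM.d x.2)) : A × M)
          = (f x.2, 0) + ((0 : A), -(SM.d x.2)) := by simp
      have hneg2 : (((0 : A), -(SM.d x.2)) : A × M) = -(((0 : A), SM.d x.2) : A × M) := by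
        simp
      refine cone_ind' SA SM (fun y => coneD SA SM f (μ ((0 : A), x.2) y)
        = μ (coneD SA SM f ((0 : A), x.2)) y
          + ((-1 : ℚ) ^ i) • μ ((0 : A), x.2) (coneD SA SM f y)) ?_ ?_ ?_ ?_
      · simp
      · intro u v hu hv
        simp only [map_add, LinearMap.add_apply, smul_add]
        rw [hu, hv]
        abel
      · intro i' a' ha'
        show coneD SA SM f (μ ((0 : A), x.2) ((a', 0) : A × M))
          = μ (coneD SA SM f ((0 : A), x.2)) ((a', 0) : A × M)
            + ((-1 : ℚ) ^ i) • μ ((0 : A), x.2) (coneD SA SM f ((a', 0) : A × M))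
        conv_lhs => rw [hMA i' (i + 1) a' x.2 ha' hx2, hpk, map_smul, hdM0, hfsm,
          SM.leibniz a' x.2 ha']
        conv_rhs => rw [hdM0, hdA0, hsplit2, map_add, LinearMap.add_apply, hAA,
          hneg2, map_neg, LinearMap.neg_apply, hMA i' (i + 2) a' (SM.d x.2) ha' hdx2m,
          hMA (i' + 1) (i + 1) (SA.d a') x.2 (SA.d_mem ha') hx2]
        simp only [Prod.smul_mk, Prod.neg_mk, Prod.mk_add_mk, smul_smul, smul_neg,
          smul_add, smul_zero, neg_add, neg_zero, add_zero, zero_add]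
        push_cast
        rw [Prod.mk.injEq]
        constructor
        · rcases grZ_cases' SA hfx2 with h0 | ⟨hi1, h0⟩
          · rw [h0, mul_zero, zero_mul, smul_zero]
          · rw [SA.gcomm h0 ha']
            rw [← zpow_natCast (-1 : ℚ) ((i + 1).toNat * i')]
            congr 1
            push_cast
            rw [Int.toNat_of_nonneg hi1]
        · have s1 : (-1 : ℚ) ^ ((i + 1) * (i' : ℤ)) * (-1 : ℚ) ^ (i' : ℕ)
              = (-1 : ℚ) ^ ((i + 2) * (i' : ℤ)) := by
            rw [← zpow_natCast (-1 : ℚ) i', hsg]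
            exact sgn_congr' 0 (by ring)
          have s2 : (-1 : ℚ) ^ i * (-1 : ℚ) ^ ((i + 1) * ((i' : ℤ) + 1))
              = -((-1 : ℚ) ^ ((i + 1) * (i' : ℤ))) := by
            rw [hsg]
            have h' : (-1 : ℚ) ^ (i + (i + 1) * ((i' : ℤ) + 1))
                = (-1 : ℚ) ^ ((i + 1) * (i' : ℤ) + 1) := sgn_congr' i (by ring)
            rw [h', zpow_add₀ (by norm_num : (-1 : ℚ) ≠ 0), zpow_one, mul_neg_one]
          rw [s1, s2, neg_smul]
          abel
      · intro j' m' hm'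
        show coneD SA SM f (μ ((0 : A), x.2) (((0 : A), m') : A × M))
          = μ (coneD SA SM f ((0 : A), x.2)) (((0 : A), m') : A × M)
            + ((-1 : ℚ) ^ i) • μ ((0 : A), x.2) (coneD SA SM f (((0 : A), m') : A × M))
        have hfm' : f m' ∈ SA.grZ j' := hfdeg j' m' hm'
        have hbal' := hbal (i + 1) j' x.2 m' hx2 hm'
        have hsplitm : ((f m', -(SM.d m')) : A × M) = (f m', 0) + ((0 : A), -(SM.d m')) := by
          simp
        conv_lhs => rw [hMM x.2 m', map_zero]
        conv_rhs => rw [hdM0, hdM0, hsplit2, map_add, LinearMap.add_apply,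
          hMM (-(SM.d x.2)) m', add_zero, hsplitm, map_add, hMM x.2 (-(SM.d m')), add_zero]
        rcases grZ_cases' SA hfx2 with h0 | ⟨hi1, h0⟩ <;>
          rcases grZ_cases' SA hfm' with h1 | ⟨hj1, h1⟩
        · rw [h0, h1, hz, map_zero, LinearMap.zero_apply, map_zero, zero_add, smul_zero]
        · have hzz : SM.smul (f x.2) m' = 0 := by
            rw [h0, map_zero, LinearMap.zero_apply]
          have hw : SM.smul (f m') x.2 = 0 := by
            rw [hzz] at hbal'
            exact (smul_eq_zero.mp hbal'.symm).resolve_left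
              (zpow_ne_zero _ (by norm_num : (-1 : ℚ) ≠ 0))
          rw [h0, hz, map_zero, LinearMap.zero_apply, zero_add,
            hMA j'.toNat (i + 1) (f m') x.2 h1 hx2, hw]
          simp
          rfl
        · have hw : SM.smul (f x.2) m' = 0 := by
            rw [hbal', h1, map_zero, LinearMap.zero_apply, smul_zero]
          rw [h1, hz, map_zero, smul_zero, add_zero,
            hAM (i + 1).toNat (f x.2) m' h0, hw]
          simp
          rfl
        · rw [hAM (i + 1).toNat (f x.2) m' h0, hMA j'.toNat (i + 1) (f m') x.2 h1 hx2,
            Int.toNat_of_nonneg hi1, Int.toNat_of_nonneg hj1, hbal']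
          have s3 : (-1 : ℚ) ^ (i + 1) * (-1 : ℚ) ^ ((i + 1) * j')
              = -((-1 : ℚ) ^ i * (-1 : ℚ) ^ ((i + 1) * j')) := by
            rw [hsg, hsg, show (i + 1) + (i + 1) * j' = (i + (i + 1) * j') + 1 by ring,
              zpow_add₀ (by norm_num : (-1 : ℚ) ≠ 0), zpow_one, mul_neg_one]
          simp only [Prod.smul_mk, smul_smul, Prod.mk_add_mk, smul_zero, add_zero, zero_add,
            s3, neg_smul]
          refine Prod.ext_iff.mpr ⟨rfl, ?_⟩
          rw [neg_add_cancel]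
          rfl
    rw [hxx]
    simp only [map_add, LinearMap.add_apply, smul_add]
    rw [main1 y, main2 y]
    abel
end

section
/- Let φ: P → Q be a morphism of connected CDGAs with P a Poincaré duality CDGA in dimension n, let φ! := θ_P^{-1} ∘ (s^{-n}#φ) : s^{-n}#Q → P, and assume φ∘φ! is balanced. Then the mapping cones P ⊕_{φ!} ss^{-n}#Q and Q ⊕_{φφ!} ss^{-n}#Q, each equipped with the semi-trivial structure, are CDGAs, and the map φ ⊕ id : P ⊕_{φ!} ss^{-n}#Q → Q ⊕_{φφ!} ss^{-n}#Q, (p, s x) ↦ (φ(p), s x), is a morphism of CDGAs. -/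
/-! ### Auxiliary infrastructure -/

section SignHelpers

lemma sgn_add (a b : ℤ) : ((-1:ℚ)) ^ (a + b) = (-1:ℚ)^a * (-1:ℚ)^b :=
  zpow_add₀ (by norm_num) a b

lemma sgn_shift (a b : ℤ) : ((-1:ℚ))^(a + 2*b) = (-1:ℚ)^a := by
  rw [sgn_add, zpow_mul]; norm_num

lemma sgn_congr {a b : ℤ} (c : ℤ) (h : a = b + 2*c) : ((-1:ℚ))^a = (-1:ℚ)^b := by
  rw [h]; exact sgn_shift b c

lemma sgn_sq (a : ℤ) : ((-1:ℚ))^a * ((-1:ℚ))^a = 1 := by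
  rw [← sgn_add]
  have h : a + a = 0 + 2*a := by ring
  rw [h, sgn_shift]; norm_num

lemma sgn_nat (k : ℕ) : ((-1:ℚ))^(k:ℤ) = (-1:ℚ)^k := zpow_natCast _ _

lemma sgn_ne_zero (a : ℤ) : ((-1:ℚ))^a ≠ 0 := zpow_ne_zero _ (by norm_num)

end SignHelpers

section SpanHelpers

variable {M : Type} [AddCommGroup M] [Module ℚ M]

/-- The set of homogeneous elements for a grading. -/
def homogSet {ι : Type} (gr : ι → Submodule ℚ M) : Set M := {x | ∃ i, x ∈ gr i}

lemma span_homog_eq_top {ι : Type} [DecidableEq ι] {gr : ι → Submodule ℚ M}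
    (h : DirectSum.IsInternal gr) : Submodule.span ℚ (homogSet gr) = ⊤ := by
  rw [eq_top_iff, ← h.submodule_iSup_eq_top]
  exact iSup_le fun i x hx => Submodule.subset_span ⟨i, hx⟩

lemma homog_induction {ι : Type} [DecidableEq ι] {gr : ι → Submodule ℚ M}
    (h : DirectSum.IsInternal gr) {Pr : M → Prop}
    (hhom : ∀ i, ∀ x ∈ gr i, Pr x)
    (hzero : Pr 0) (hadd : ∀ x y, Pr x → Pr y → Pr (x + y))
    (hsmul : ∀ (c : ℚ) x, Pr x → Pr (c • x)) : ∀ x, Pr x := by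
  intro x
  have hx : x ∈ Submodule.span ℚ (homogSet gr) := by rw [span_homog_eq_top h]; trivial
  exact Submodule.span_induction (fun y hy => hy.elim fun i hi => hhom i y hi) hzero
    (fun a b _ _ pa pb => hadd a b pa pb) (fun c a _ pa => hsmul c a pa) hx

lemma exists_decomp {ι : Type} [DecidableEq ι] {gr : ι → Submodule ℚ M}
    (h : DirectSum.IsInternal gr) (x : M) :
    ∃ c : ι →₀ M, (∀ i, c i ∈ gr i) ∧ (c.sum fun _ v => v) = x := by
  have hx : x ∈ iSup gr := by rw [h.submodule_iSup_eq_top]; trivial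
  rwa [Submodule.mem_iSup_iff_exists_finsupp] at hx

end SpanHelpers

namespace CDGAStruct

variable {A : Type} [Ring A] [Algebra ℚ A] (SA : CDGAStruct A)

lemma grZ_of_nat (i : ℕ) : SA.grZ (i : ℤ) = SA.gr i := by
  simp [grZ, Int.toNat_natCast]

lemma grZ_neg {j : ℤ} (h : j < 0) : SA.grZ j = ⊥ := by
  simp [grZ, not_le.2 h]

lemma mem_grZ_cases {j : ℤ} {a : A} (ha : a ∈ SA.grZ j) :
    (0 ≤ j ∧ a ∈ SA.gr j.toNat) ∨ (j < 0 ∧ a = 0) := by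
  by_cases h : 0 ≤ j
  · left; refine ⟨h, ?_⟩
    simpa [grZ, h] using ha
  · right
    refine ⟨not_le.1 h, ?_⟩
    rw [SA.grZ_neg (not_le.1 h)] at ha
    simpa using ha

lemma mem_grZ_of_nat {i : ℕ} {a : A} (ha : a ∈ SA.gr i) : a ∈ SA.grZ (i:ℤ) := by
  rw [grZ_of_nat]; exact ha

lemma one_memZ : (1:A) ∈ SA.grZ 0 := by
  have := SA.one_mem
  simpa using SA.mem_grZ_of_nat (i := 0) this

lemma mul_memZ {i j : ℤ} {a b : A} (ha : a ∈ SA.grZ i) (hb : b ∈ SA.grZ j) :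
    a * b ∈ SA.grZ (i + j) := by
  rcases SA.mem_grZ_cases ha with ⟨hi, ha'⟩ | ⟨_, rfl⟩
  · rcases SA.mem_grZ_cases hb with ⟨hj, hb'⟩ | ⟨_, rfl⟩
    · have := SA.mul_mem ha' hb'
      have hc : ((i.toNat + j.toNat : ℕ) : ℤ) = i + j := by omega
      have := SA.mem_grZ_of_nat this
      rwa [hc] at this
    · rw [mul_zero]; exact Submodule.zero_mem _
  · rw [zero_mul]; exact Submodule.zero_mem _

lemma gcommZ {i j : ℤ} {a b : A} (ha : a ∈ SA.grZ i) (hb : b ∈ SA.grZ j) :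
    a * b = ((-1:ℚ)^(i*j)) • (b * a) := by
  rcases SA.mem_grZ_cases ha with ⟨hi, ha'⟩ | ⟨_, rfl⟩
  · rcases SA.mem_grZ_cases hb with ⟨hj, hb'⟩ | ⟨_, rfl⟩
    · have h := SA.gcomm ha' hb'
      have hc : i * j = ((i.toNat * j.toNat : ℕ) : ℤ) := by
        push_cast; rw [Int.toNat_of_nonneg hi, Int.toNat_of_nonneg hj]
      rw [hc, sgn_nat]; exact h
    · simp
  · simp

lemma d_memZ {j : ℤ} {a : A} (ha : a ∈ SA.grZ j) : SA.d a ∈ SA.grZ (j + 1) := by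
  rcases SA.mem_grZ_cases ha with ⟨hj, ha'⟩ | ⟨_, rfl⟩
  · have := SA.d_mem ha'
    have hc : ((j.toNat + 1 : ℕ) : ℤ) = j + 1 := by omega
    have := SA.mem_grZ_of_nat this
    rwa [hc] at this
  · rw [map_zero]; exact Submodule.zero_mem _

lemma leibnizZ {i : ℤ} (a b : A) (ha : a ∈ SA.grZ i) :
    SA.d (a * b) = SA.d a * b + ((-1:ℚ)^i) • (a * SA.d b) := by
  rcases SA.mem_grZ_cases ha with ⟨hi, ha'⟩ | ⟨_, rfl⟩
  · have h := SA.leibniz a b ha'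
    have hc : i = ((i.toNat : ℕ) : ℤ) := by omega
    rw [hc, sgn_nat]; exact h
  · simp

lemma internalZ : DirectSum.IsInternal SA.grZ := by
  rw [DirectSum.isInternal_submodule_iff_iSupIndep_and_iSup_eq_top]
  have hind := SA.internal.submodule_iSupIndep
  have hsup := SA.internal.submodule_iSup_eq_top
  constructor
  · intro j
    by_cases hj : 0 ≤ j
    · have : SA.grZ j = SA.gr j.toNat := by
        simp [grZ, hj]
      rw [this]
      refine (hind j.toNat).mono_right ?_
      refine iSup₂_le fun k hk => ?_
      by_cases hk0 : 0 ≤ k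
      · have : SA.grZ k = SA.gr k.toNat := by simp [grZ, hk0]
        rw [this]
        have hne : k.toNat ≠ j.toNat := by omega
        exact le_iSup₂ (f := fun l (_ : l ≠ j.toNat) => SA.gr l) k.toNat hne
      · rw [SA.grZ_neg (not_le.1 hk0)]; exact bot_le
    · rw [SA.grZ_neg (not_le.1 hj)]; exact disjoint_bot_left
  · rw [eq_top_iff, ← hsup]
    refine iSup_le fun i => ?_
    rw [← SA.grZ_of_nat i]
    exact le_iSup SA.grZ (i : ℤ)

end CDGAStruct


section ConeCDGA

variable {A : Type} [Ring A] [Algebra ℚ A] {M : Type} [AddCommGroup M] [Module ℚ M]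
variable (SA : CDGAStruct A) (SM : DGModStruct SA M)

-- ℤ-graded versions of the module axioms
lemma smul_memZ {σ j : ℤ} {a : A} {m : M} (ha : a ∈ SA.grZ σ) (hm : m ∈ SM.gr j) :
    SM.smul a m ∈ SM.gr (σ + j) := by
  rcases SA.mem_grZ_cases ha with ⟨hσ, ha'⟩ | ⟨_, rfl⟩
  · have := SM.smul_mem ha' hm
    have hc : ((σ.toNat : ℤ) + j) = σ + j := by omega
    rwa [hc] at this
  · rw [map_zero, LinearMap.zero_apply]; exact Submodule.zero_mem _

lemma leibnizMZ {σ : ℤ} (a : A) (m : M) (ha : a ∈ SA.grZ σ) :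
    SM.d (SM.smul a m) = SM.smul (SA.d a) m + ((-1:ℚ)^σ) • SM.smul a (SM.d m) := by
  rcases SA.mem_grZ_cases ha with ⟨hσ, ha'⟩ | ⟨_, rfl⟩
  · have h := SM.leibniz a m ha'
    have hc : σ = ((σ.toNat : ℕ) : ℤ) := by omega
    rw [hc, sgn_nat]; exact h
  · simp

lemma prod_split (x : A × M) : x = (x.1, 0) + (0, x.2) := by
  ext <;> simp

variable (μ : A × M →ₗ[ℚ] A × M →ₗ[ℚ] A × M) (hμ : SemiTrivialMul SA SM μ)

include hμ in
lemma mu_amZ {σ : ℤ} {a : A} (ha : a ∈ SA.grZ σ) (m : M) :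
    μ (a, 0) (0, m) = (0, ((-1:ℚ)^σ) • SM.smul a m) := by
  rcases SA.mem_grZ_cases ha with ⟨hσ, ha'⟩ | ⟨_, rfl⟩
  · have h := hμ.2.1 σ.toNat a m ha'
    have hc : σ = ((σ.toNat : ℕ) : ℤ) := by omega
    rw [hc, sgn_nat]; exact h
  · have h0 : ((0:A), (0:M)) = (0 : A × M) := rfl
    rw [h0, map_zero, LinearMap.zero_apply, map_zero, LinearMap.zero_apply]
    simp [Prod.mk_zero_zero]

include hμ in
lemma mu_maZ {σ τ : ℤ} {a : A} {m : M} (ha : a ∈ SA.grZ σ) (hm : m ∈ SM.gr τ) :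
    μ (0, m) (a, 0) = (0, ((-1:ℚ)^(τ * σ)) • SM.smul a m) := by
  rcases SA.mem_grZ_cases ha with ⟨hσ, ha'⟩ | ⟨_, rfl⟩
  · have h := hμ.2.2.1 σ.toNat τ a m ha' hm
    have hc : τ * σ = τ * ((σ.toNat : ℕ) : ℤ) := by congr 1; omega
    rw [hc]; exact h
  · have h0 : ((0:A), (0:M)) = (0 : A × M) := rfl
    rw [h0, map_zero]
    rw [map_zero, LinearMap.zero_apply]
    simp [Prod.mk_zero_zero]

lemma mu_scal_right (x : A × M) (c : ℚ) (m : M) :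
    μ x (0, c • m) = c • μ x (0, m) := by
  have : ((0:A), c • m) = c • ((0:A), m) := by ext <;> simp
  rw [this, map_smul]

lemma mu_scal_left (c : ℚ) (m : M) (y : A × M) :
    μ (0, c • m) y = c • μ (0, m) y := by
  have : ((0:A), c • m) = c • ((0:A), m) := by ext <;> simp
  rw [this, map_smul, LinearMap.smul_apply]

lemma mem_cone_left {σ : ℤ} {a : A} (ha : a ∈ SA.grZ σ) :
    ((a, 0) : A × M) ∈ coneGr SA SM σ :=
  ⟨ha, Submodule.zero_mem _⟩

lemma mem_cone_right {τ : ℤ} {m : M} (hm : m ∈ SM.gr (τ + 1)) :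
    ((0, m) : A × M) ∈ coneGr SA SM τ :=
  ⟨Submodule.zero_mem _, hm⟩

lemma coneD_apply (g : M →ₗ[ℚ] A) (a : A) (m : M) :
    coneD SA SM g (a, m) = (SA.d a + g m, -(SM.d m)) := rfl

/-- Induction over sums of pure homogeneous elements of a cone. -/
lemma pure_induction {Pr : A × M → Prop}
    (hL : ∀ (σ : ℤ) (a : A), a ∈ SA.grZ σ → Pr (a, 0))
    (hR : ∀ (τ : ℤ) (m : M), m ∈ SM.gr τ → Pr (0, m))
    (h0 : Pr 0) (hadd : ∀ x y, Pr x → Pr y → Pr (x + y))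
    (hsmul : ∀ (c : ℚ) x, Pr x → Pr (c • x)) : ∀ x, Pr x := by
  intro x
  rw [prod_split x]
  refine hadd _ _ ?_ ?_
  · have := homog_induction SA.internalZ (Pr := fun a => Pr (a, 0)) (fun σ a ha => hL σ a ha)
      h0 (fun a b pa pb => by
        show Pr ((a + b : A), (0:M))
        have : ((a + b : A), (0:M)) = (a, 0) + (b, 0) := by ext <;> simp
        rw [this]; exact hadd _ _ pa pb)
      (fun c a pa => by
        show Pr ((c • a : A), (0:M))
        have : ((c • a : A), (0:M)) = c • ((a:A), (0:M)) := by ext <;> simp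
        rw [this]; exact hsmul c _ pa)
    exact this x.1
  · have := homog_induction SM.internal (Pr := fun m => Pr (0, m)) (fun τ m hm => hR τ m hm)
      h0 (fun a b pa pb => by
        show Pr ((0:A), a + b)
        have : ((0:A), a + b) = ((0:A), a) + ((0:A), b) := by ext <;> simp
        rw [this]; exact hadd _ _ pa pb)
      (fun c a pa => by
        show Pr ((0:A), c • a)
        have : ((0:A), c • a) = c • ((0:A), a) := by ext <;> simp
        rw [this]; exact hsmul c _ pa)
    exact this x.2


lemma cone_mem {j : ℤ} {x : A × M} (hx : x ∈ coneGr SA SM j) :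
    x.1 ∈ SA.grZ j ∧ x.2 ∈ SM.gr (j + 1) := ⟨hx.1, hx.2⟩

lemma cone_internal : DirectSum.IsInternal (coneGr SA SM) := by
  rw [DirectSum.isInternal_submodule_iff_iSupIndep_and_iSup_eq_top]
  have indA := SA.internalZ.submodule_iSupIndep
  have indM := SM.internal.submodule_iSupIndep
  constructor
  · intro p
    rw [Submodule.disjoint_def]
    intro x hx hx2
    have h1 : (⨆ (q : ℤ) (_ : q ≠ p), coneGr SA SM q) ≤
        (⨆ (q : ℤ) (_ : q ≠ p), SA.grZ q).prod (⨆ (q : ℤ) (_ : q ≠ p), SM.gr (q+1)) := by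
      refine iSup₂_le fun q hq => ?_
      exact Submodule.prod_mono (le_iSup₂ (f := fun q (_ : q ≠ p) => SA.grZ q) q hq)
        (le_iSup₂ (f := fun q (_ : q ≠ p) => SM.gr (q+1)) q hq)
    have hx2' := h1 hx2
    have hM2 : (⨆ (q : ℤ) (_ : q ≠ p), SM.gr (q+1)) ≤
        ⨆ (r : ℤ) (_ : r ≠ p + 1), SM.gr r := by
      refine iSup₂_le fun q hq => ?_
      exact le_iSup₂ (f := fun r (_ : r ≠ p + 1) => SM.gr r) (q+1) (by omega)
    have e1 : x.1 = 0 := (Submodule.disjoint_def.1 (indA p)) x.1 hx.1 hx2'.1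
    have e2 : x.2 = 0 := (Submodule.disjoint_def.1 (indM (p+1))) x.2 hx.2 (hM2 hx2'.2)
    exact Prod.ext e1 e2
  · rw [eq_top_iff]
    rintro x -
    rw [prod_split x]
    refine Submodule.add_mem _ ?_ ?_
    · have ha : x.1 ∈ ⨆ q, SA.grZ q := by rw [SA.internalZ.submodule_iSup_eq_top]; trivial
      have hmap : ((x.1, 0) : A × M) ∈ Submodule.map (LinearMap.inl ℚ A M) (⨆ q, SA.grZ q) :=
        ⟨x.1, ha, rfl⟩
      rw [Submodule.map_iSup] at hmap
      have hle : ∀ q, Submodule.map (LinearMap.inl ℚ A M) (SA.grZ q) ≤ coneGr SA SM q := by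
        rintro q y ⟨b, hb, rfl⟩; exact mem_cone_left SA SM hb
      exact iSup_mono hle hmap
    · have hm : x.2 ∈ ⨆ r, SM.gr r := by rw [SM.internal.submodule_iSup_eq_top]; trivial
      have hshift : (⨆ r, SM.gr r) ≤ ⨆ q, SM.gr (q + 1) := by
        refine iSup_le fun r => le_iSup_of_le (r - 1) ?_
        have : r - 1 + 1 = r := by omega
        rw [this]
      have hmap : ((0, x.2) : A × M) ∈ Submodule.map (LinearMap.inr ℚ A M) (⨆ q, SM.gr (q+1)) :=
        ⟨x.2, hshift hm, rfl⟩
      rw [Submodule.map_iSup] at hmap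
      have hle : ∀ q, Submodule.map (LinearMap.inr ℚ A M) (SM.gr (q+1)) ≤ coneGr SA SM q := by
        rintro q y ⟨v, hv, rfl⟩; exact mem_cone_right SA SM hv
      exact iSup_mono hle hmap

include hμ in
lemma cone_left_unit : ∀ x, μ ((1:A), (0:M)) x = x := by
  intro x
  conv_lhs => rw [prod_split x]
  conv_rhs => rw [prod_split x]
  rw [map_add]
  congr 1
  · rw [hμ.1]; simp
  · rw [mu_amZ SA SM μ hμ SA.one_memZ]
    simp [SM.one_smul]

include hμ in
lemma cone_right_unit : ∀ x, μ x ((1:A), (0:M)) = x := by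
  intro x
  conv_lhs => rw [prod_split x]
  rw [map_add, LinearMap.add_apply]
  conv_rhs => rw [prod_split x]
  congr 1
  · rw [hμ.1]; simp
  · have : ∀ m : M, μ (0, m) ((1:A), (0:M)) = (0, m) := by
      refine homog_induction SM.internal (Pr := fun m => μ (0, m) ((1:A), (0:M)) = (0, m))
        (fun τ m hm => ?_) (by simp [Prod.mk_zero_zero]) (fun a b pa pb => ?_) (fun c a pa => ?_)
      · show μ (0, m) ((1:A), (0:M)) = ((0:A), m)
        rw [mu_maZ SA SM μ hμ SA.one_memZ hm]
        simp [SM.one_smul]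
      · show μ (0, a + b) (1, 0) = ((0:A), a + b)
        have h : ((0:A), a + b) = ((0:A), a) + ((0:A), b) := by ext <;> simp
        rw [h, map_add, LinearMap.add_apply, pa, pb]
      · show μ (0, c • a) (1, 0) = ((0:A), c • a)
        rw [mu_scal_left, pa]
        ext <;> simp
    exact this x.2

include hμ in
lemma cone_mul_mem : ∀ (i j : ℤ) (x y : A × M), x ∈ coneGr SA SM i → y ∈ coneGr SA SM j →
    μ x y ∈ coneGr SA SM (i + j) := by
  intro i j x y hx hy
  obtain ⟨hx1, hx2⟩ := cone_mem SA SM hx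
  obtain ⟨hy1, hy2⟩ := cone_mem SA SM hy
  rw [prod_split x, prod_split y]
  simp only [map_add, LinearMap.add_apply]
  refine Submodule.add_mem _ (Submodule.add_mem _ ?_ ?_) (Submodule.add_mem _ ?_ ?_)
  · rw [hμ.1]
    exact mem_cone_left SA SM (SA.mul_memZ hx1 hy1)
  · rw [mu_maZ SA SM μ hμ hy1 hx2]
    refine mem_cone_right SA SM (Submodule.smul_mem _ _ ?_)
    have := smul_memZ SA SM hy1 hx2
    have hc : j + (i + 1) = (i + j) + 1 := by ring
    rwa [hc] at this
  · rw [mu_amZ SA SM μ hμ hx1]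
    refine mem_cone_right SA SM (Submodule.smul_mem _ _ ?_)
    have := smul_memZ SA SM hx1 hy2
    have hc : i + (j + 1) = (i + j) + 1 := by ring
    rwa [hc] at this
  · rw [hμ.2.2.2]
    exact Submodule.zero_mem _

include hμ in
lemma cone_gcomm : ∀ (i j : ℤ) (x y : A × M), x ∈ coneGr SA SM i → y ∈ coneGr SA SM j →
    μ x y = ((-1:ℚ) ^ (i * j)) • μ y x := by
  intro i j x y hx hy
  obtain ⟨hx1, hx2⟩ := cone_mem SA SM hx
  obtain ⟨hy1, hy2⟩ := cone_mem SA SM hy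
  conv_lhs => rw [prod_split x, prod_split y]
  conv_rhs => rw [prod_split x, prod_split y]
  simp only [map_add, LinearMap.add_apply]
  rw [hμ.1, hμ.1, mu_amZ SA SM μ hμ hx1, mu_amZ SA SM μ hμ hy1,
      mu_maZ SA SM μ hμ hy1 hx2, mu_maZ SA SM μ hμ hx1 hy2, hμ.2.2.2, hμ.2.2.2]
  have e1 : (-1:ℚ)^(i*j) * (-1:ℚ)^((j+1)*i) = (-1:ℚ)^(i:ℤ) := by
    rw [← sgn_add]; exact sgn_congr (i*j) (by ring)
  have e2 : (-1:ℚ)^(i*j) * (-1:ℚ)^(j:ℤ) = (-1:ℚ)^((i+1)*j) := by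
    rw [← sgn_add]; exact sgn_congr 0 (by ring)
  refine Prod.ext ?_ ?_
  · simpa using SA.gcommZ hx1 hy1
  · simp only [Prod.snd_add, Prod.smul_snd]
    simp
    rw [smul_smul, smul_smul, e1, e2]
    exact add_comm _ _


lemma sgn_succ (e : ℤ) : ((-1:ℚ))^(e+1) = -((-1:ℚ)^e) := by
  rw [sgn_add]; simp

lemma smul_pair (c : ℚ) (v : M) : c • ((0 : A), v) = ((0:A), c • v) := by
  ext <;> simp

lemma pair_neg (v : M) : ((0:A), -v) = -((0:A), v) := by ext <;> simp

include hμ in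
lemma cone_assoc : ∀ x y z : A × M, μ (μ x y) z = μ x (μ y z) := by
  refine pure_induction SA SM (Pr := fun x => ∀ y z, μ (μ x y) z = μ x (μ y z))
    (fun σ₁ a ha => ?_) (fun τ₁ m hm => ?_) (fun y z => by simp)
    (fun x x' px px' y z => by
      simp only [map_add, LinearMap.add_apply]
      rw [px y z, px' y z])
    (fun c x px y z => by
      simp only [map_smul, LinearMap.smul_apply]
      rw [px y z])
  · -- x = (a, 0)
    refine pure_induction SA SM (Pr := fun y => ∀ z, μ (μ (a,0) y) z = μ (a,0) (μ y z))
      (fun σ₂ b hb => ?_) (fun τ₂ p hp => ?_) (fun z => by simp)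
      (fun y y' py py' z => by
        simp only [map_add, LinearMap.add_apply]
        rw [py z, py' z])
      (fun c y py z => by
        simp only [map_smul, LinearMap.smul_apply]
        rw [py z])
    · -- y = (b, 0)
      refine pure_induction SA SM (Pr := fun z => μ (μ (a,0) (b,0)) z = μ (a,0) (μ (b,0) z))
        (fun σ₃ cc hcc => ?_) (fun τ₃ q hq => ?_) (by simp)
        (fun z z' pz pz' => by
          simp only [map_add]
          rw [pz, pz'])
        (fun c z pz => by
          simp only [map_smul]
          rw [pz])
      · beta_reduce
        rw [hμ.1, hμ.1, hμ.1, hμ.1, mul_assoc]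
      · -- z = (0, q) : case LLR
        beta_reduce
        rw [hμ.1, mu_amZ SA SM μ hμ (SA.mul_memZ ha hb) q, mu_amZ SA SM μ hμ hb q,
          mu_scal_right, mu_amZ SA SM μ hμ ha, smul_pair, SM.mul_smul, smul_smul, ← sgn_add,
          add_comm σ₂ σ₁]
    · -- y = (0, p) : cases L R *
      refine pure_induction SA SM (Pr := fun z => μ (μ (a,0) (0,p)) z = μ (a,0) (μ (0,p) z))
        (fun σ₃ cc hcc => ?_) (fun τ₃ q hq => ?_) (by simp)
        (fun z z' pz pz' => by
          simp only [map_add]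
          rw [pz, pz'])
        (fun c z pz => by
          simp only [map_smul]
          rw [pz])
      · -- z = (cc, 0) : LRL
        beta_reduce
        rw [mu_amZ SA SM μ hμ ha p, mu_scal_left,
          mu_maZ SA SM μ hμ hcc (smul_memZ SA SM ha hp),
          mu_maZ SA SM μ hμ hcc hp, mu_scal_right, mu_amZ SA SM μ hμ ha]
        -- LHS: (-1)^σ₁ • (0, (-1)^{(σ₁+τ₂)σ₃} • Sm cc (Sm a p))
        -- RHS: (-1)^{τ₂σ₃} • (0, (-1)^{σ₁} • Sm a (Sm cc p))
        rw [← SM.mul_smul cc a p, SA.gcommZ hcc ha, map_smul, LinearMap.smul_apply,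
          ← SM.mul_smul a cc p, smul_pair, smul_pair]
        congr 1
        rw [smul_smul, smul_smul, smul_smul, ← sgn_add, ← sgn_add, ← sgn_add]
        congr 1
        exact sgn_congr (σ₁ * σ₃) (by ring)
      · -- z = (0, q) : LRR
        beta_reduce
        rw [mu_amZ SA SM μ hμ ha p, mu_scal_left, hμ.2.2.2, hμ.2.2.2, smul_zero, map_zero]
  · -- x = (0, m)
    refine pure_induction SA SM (Pr := fun y => ∀ z, μ (μ (0,m) y) z = μ (0,m) (μ y z))
      (fun σ₂ b hb => ?_) (fun τ₂ p hp => ?_) (fun z => by simp)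
      (fun y y' py py' z => by
        simp only [map_add, LinearMap.add_apply]
        rw [py z, py' z])
      (fun c y py z => by
        simp only [map_smul, LinearMap.smul_apply]
        rw [py z])
    · -- y = (b, 0)
      refine pure_induction SA SM (Pr := fun z => μ (μ (0,m) (b,0)) z = μ (0,m) (μ (b,0) z))
        (fun σ₃ cc hcc => ?_) (fun τ₃ q hq => ?_) (by simp)
        (fun z z' pz pz' => by
          simp only [map_add]
          rw [pz, pz'])
        (fun c z pz => by
          simp only [map_smul]
          rw [pz])
      · -- RLL
        beta_reduce
        rw [mu_maZ SA SM μ hμ hb hm, mu_scal_left,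
          mu_maZ SA SM μ hμ hcc (smul_memZ SA SM hb hm), hμ.1,
          mu_maZ SA SM μ hμ (SA.mul_memZ hb hcc) hm]
        rw [← SM.mul_smul cc b m, SA.gcommZ hcc hb, map_smul, LinearMap.smul_apply, smul_pair]
        congr 1
        rw [smul_smul, smul_smul, ← sgn_add, ← sgn_add]
        congr 1
        exact sgn_congr (σ₂ * σ₃) (by ring)
      · -- RLR
        beta_reduce
        rw [mu_maZ SA SM μ hμ hb hm, mu_scal_left, hμ.2.2.2, smul_zero,
          mu_amZ SA SM μ hμ hb q, mu_scal_right, hμ.2.2.2, smul_zero]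
    · -- y = (0, p) : RR*
      intro z
      rw [hμ.2.2.2, map_zero, LinearMap.zero_apply]
      rw [prod_split z]
      simp only [map_add]
      rw [show ((z.1, (0:M)) : A × M) = (z.1, 0) from rfl]
      have h1 : μ ((0:A), p) (z.1, 0) + μ ((0:A), p) (0, z.2) =
          μ ((0:A), p) ((z.1, 0) + (0, z.2)) := by rw [map_add]
      -- compute μ (0,m) (μ (0,p) z) = 0 by cases on z parts
      have hz1 : ∀ w : A × M, (∃ v : M, w = (0, v)) → μ ((0:A), m) w = 0 := by
        rintro w ⟨v, rfl⟩
        exact hμ.2.2.2 m v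
      have hp1 : ∀ x1 : A, μ ((0:A), p) (x1, 0) ∈ {w : A × M | ∃ v : M, w = (0, v)} := by
        intro x1
        have := homog_induction SA.internalZ (Pr := fun x1 : A => ∃ v : M, μ ((0:A), p) (x1, 0) = (0, v))
          (fun σ x1 hx1 => ⟨_, mu_maZ SA SM μ hμ hx1 hp⟩)
          (⟨0, by simp [Prod.mk_zero_zero]⟩)
          (fun x1 x1' ⟨v, hv⟩ ⟨v', hv'⟩ => ⟨v + v', by
            have : ((x1 + x1' : A), (0:M)) = (x1, 0) + (x1', 0) := by ext <;> simp
            rw [this, map_add, hv, hv']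
            ext <;> simp⟩)
          (fun c x1 ⟨v, hv⟩ => ⟨c • v, by
            have : ((c • x1 : A), (0:M)) = c • ((x1 : A), (0:M)) := by ext <;> simp
            rw [this, map_smul, hv]
            ext <;> simp⟩)
        exact this x1
      obtain ⟨v1, hv1⟩ := hp1 z.1
      have hv2 : μ ((0:A), p) (0, z.2) = 0 := hμ.2.2.2 p z.2
      rw [hv1, hv2, hμ.2.2.2 m v1, map_zero, add_zero]

lemma cone_d_mem (g : M →ₗ[ℚ] A) (hg_deg : ∀ (j : ℤ), ∀ m ∈ SM.gr j, g m ∈ SA.grZ j) :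
    ∀ (j : ℤ), ∀ x ∈ coneGr SA SM j, coneD SA SM g x ∈ coneGr SA SM (j+1) := by
  intro j x hx
  obtain ⟨h1, h2⟩ := cone_mem SA SM hx
  refine ⟨Submodule.add_mem _ (SA.d_memZ h1) (hg_deg _ _ h2), Submodule.neg_mem _ ?_⟩
  exact SM.d_mem h2

lemma cone_d_sq (g : M →ₗ[ℚ] A) (hg_d : ∀ m, g (SM.d m) = SA.d (g m)) :
    ∀ x, coneD SA SM g (coneD SA SM g x) = 0 := by
  intro x
  show (SA.d (SA.d x.1 + g x.2) + g (-(SM.d x.2)), -(SM.d (-(SM.d x.2)))) = 0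
  rw [map_add, SA.d_sq, map_neg, hg_d]
  ext <;> simp [SM.d_sq]


lemma coneD_left (g : M →ₗ[ℚ] A) (a : A) :
    coneD SA SM g (a, 0) = (SA.d a, 0) := by
  show (SA.d a + g 0, -(SM.d 0)) = (SA.d a, (0:M))
  simp

lemma coneD_right (g : M →ₗ[ℚ] A) (m : M) :
    coneD SA SM g (0, m) = (g m, -(SM.d m)) := by
  show (SA.d 0 + g m, -(SM.d m)) = (g m, -(SM.d m))
  simp

include hμ in
lemma cone_leibniz (g : M →ₗ[ℚ] A)
    (hg_deg : ∀ (j : ℤ), ∀ m ∈ SM.gr j, g m ∈ SA.grZ j)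
    (hg_smul : ∀ (a : A) (m : M), g (SM.smul a m) = a * g m)
    (hg_bal : ∀ (i j : ℤ) (x y : M), x ∈ SM.gr i → y ∈ SM.gr j →
        SM.smul (g x) y = ((-1:ℚ)^(i*j)) • SM.smul (g y) x) :
    ∀ (i : ℤ) (x y : A × M), x ∈ coneGr SA SM i →
      coneD SA SM g (μ x y) = μ (coneD SA SM g x) y + ((-1:ℚ)^i) • μ x (coneD SA SM g y) := by
  have subL : ∀ (i : ℤ) (a : A), a ∈ SA.grZ i → ∀ y, coneD SA SM g (μ (a,0) y) =
      μ (coneD SA SM g (a,0)) y + ((-1:ℚ)^i) • μ (a,0) (coneD SA SM g y) := by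
    intro i a ha
    refine pure_induction SA SM
      (Pr := fun y => coneD SA SM g (μ (a,0) y) =
        μ (coneD SA SM g (a,0)) y + ((-1:ℚ)^i) • μ (a,0) (coneD SA SM g y))
      (fun σ b hb => ?_) (fun τ q hq => ?_) (by simp) ?_ ?_
    · -- y = (b, 0)
      beta_reduce
      rw [hμ.1, coneD_left, coneD_left, coneD_left, hμ.1, hμ.1, SA.leibnizZ a b ha]
      ext <;> simp
    · -- y = (0, q)
      beta_reduce
      rw [mu_amZ SA SM μ hμ ha q, coneD_left, coneD_right, coneD_right,
        mu_amZ SA SM μ hμ (SA.d_memZ ha) q]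
      rw [show ((g q, -(SM.d q)) : A × M) = (g q, 0) + (0, -(SM.d q)) by ext <;> simp]
      rw [map_add, hμ.1, pair_neg, map_neg, mu_amZ SA SM μ hμ ha (SM.d q)]
      rw [map_smul, hg_smul, map_smul, leibnizMZ SA SM a q ha]
      ext <;> simp [smul_add, smul_smul, sgn_sq, sgn_succ] <;> abel
    · intro y y' py py'
      show coneD SA SM g (μ (a,0) (y + y')) = _
      simp only [map_add, smul_add]
      rw [py, py']
      abel
    · intro c y py
      show coneD SA SM g (μ (a,0) (c • y)) = _
      simp only [map_smul, LinearMap.smul_apply]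
      rw [py, smul_add, smul_comm]
  have subR : ∀ (i : ℤ) (m : M), m ∈ SM.gr (i+1) → ∀ y, coneD SA SM g (μ (0,m) y) =
      μ (coneD SA SM g (0,m)) y + ((-1:ℚ)^i) • μ (0,m) (coneD SA SM g y) := by
    intro i m hm
    refine pure_induction SA SM
      (Pr := fun y => coneD SA SM g (μ (0,m) y) =
        μ (coneD SA SM g (0,m)) y + ((-1:ℚ)^i) • μ (0,m) (coneD SA SM g y))
      (fun σ b hb => ?_) (fun τ q hq => ?_) (by simp) ?_ ?_
    · -- y = (b, 0)
      beta_reduce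
      have e1 : coneD SA SM g ((0:A), m) = (g m, 0) + (0, -(SM.d m)) := by
        rw [coneD_right]; ext <;> simp
      rw [mu_maZ SA SM μ hμ hb hm, coneD_right, coneD_left, e1, map_add, LinearMap.add_apply,
        hμ.1, pair_neg, map_neg, LinearMap.neg_apply, mu_maZ SA SM μ hμ hb (SM.d_mem hm),
        mu_maZ SA SM μ hμ (SA.d_memZ hb) hm]
      rw [map_smul, map_smul, hg_smul, SA.gcommZ hb (hg_deg _ _ hm),
        leibnizMZ SA SM b m hb]
      have hdb : ((-1:ℚ)^i) • (((-1:ℚ)^((i+1)*(σ+1))) • SM.smul (SA.d b) m)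
          = -(((-1:ℚ)^((i+1)*σ)) • SM.smul (SA.d b) m) := by
        rw [smul_smul, ← sgn_add,
          sgn_congr (a := i + (i+1)*(σ+1)) (b := (i+1)*σ + 1) i (by ring),
          sgn_succ, neg_smul]
      rw [smul_pair ((-1:ℚ)^i), hdb, ← pair_neg]
      have eY : ((-1:ℚ))^((i+1)*σ + σ) = ((-1:ℚ))^((i+1+1)*σ) :=
        sgn_congr (a := (i+1)*σ + σ) (b := (i+1+1)*σ) 0 (by ring)
      have efst : ((-1:ℚ))^((i+1)*σ) • (((-1:ℚ))^(σ*(i+1)) • (g m * b)) = g m * b := by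
        rw [smul_smul, ← sgn_add,
          sgn_congr (a := (i+1)*σ + σ*(i+1)) (b := 0) (σ*(i+1)) (by ring), zpow_zero, one_smul]
      have esnd : -(((-1:ℚ))^((i+1)*σ) • (SM.smul (SA.d b) m + ((-1:ℚ))^σ • SM.smul b (SM.d m)))
          = -(((-1:ℚ))^((i+1)*σ) • SM.smul (SA.d b) m)
            + -(((-1:ℚ))^((i+1+1)*σ) • SM.smul b (SM.d m)) := by
        rw [smul_add, smul_smul, ← sgn_add, eY]
        abel
      rw [efst, esnd]
      ext <;> simp
      abel
    · -- y = (0, q)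
      beta_reduce
      have e1 : coneD SA SM g ((0:A), m) = (g m, 0) + (0, -(SM.d m)) := by
        rw [coneD_right]; ext <;> simp
      have e2 : coneD SA SM g ((0:A), q) = (g q, 0) + (0, -(SM.d q)) := by
        rw [coneD_right]; ext <;> simp
      rw [hμ.2.2.2, map_zero, e1, e2]
      rw [map_add, LinearMap.add_apply, map_add]
      rw [pair_neg, pair_neg, map_neg, LinearMap.neg_apply, map_neg, hμ.2.2.2, hμ.2.2.2]
      rw [mu_amZ SA SM μ hμ (hg_deg _ _ hm) q, mu_maZ SA SM μ hμ (hg_deg _ _ hq) hm,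
        hg_bal (i+1) τ m q hm hq]
      simp only [neg_zero, add_zero]
      rw [smul_pair ((-1:ℚ)^i), smul_smul, smul_smul, ← sgn_add, ← sgn_add,
        sgn_congr (a := i + 1 + (i+1)*τ) (b := (i + (i+1)*τ) + 1) 0 (by ring), sgn_succ, neg_smul]
      ext <;> simp
    · intro y y' py py'
      show coneD SA SM g (μ (0,m) (y + y')) = _
      simp only [map_add, smul_add]
      rw [py, py']
      abel
    · intro c y py
      show coneD SA SM g (μ (0,m) (c • y)) = _
      simp only [map_smul, LinearMap.smul_apply]
      rw [py, smul_add, smul_comm]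
  intro i x y hx
  obtain ⟨h1, h2⟩ := cone_mem SA SM hx
  have hsplit := prod_split x
  rw [hsplit]
  simp only [map_add, LinearMap.add_apply, smul_add]
  rw [subL i x.1 h1 y, subR i x.2 h2 y]
  abel

include hμ in
theorem cone_isGCDGA (g : M →ₗ[ℚ] A)
    (hg_deg : ∀ (j : ℤ), ∀ m ∈ SM.gr j, g m ∈ SA.grZ j)
    (hg_d : ∀ m, g (SM.d m) = SA.d (g m))
    (hg_smul : ∀ (a : A) (m : M), g (SM.smul a m) = a * g m)
    (hg_bal : ∀ (i j : ℤ) (x y : M), x ∈ SM.gr i → y ∈ SM.gr j →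
        SM.smul (g x) y = ((-1:ℚ)^(i*j)) • SM.smul (g y) x) :
    IsGCDGA (coneGr SA SM) ((1:A), (0:M)) μ (coneD SA SM g) :=
  ⟨cone_internal SA SM, ⟨SA.one_memZ, Submodule.zero_mem _⟩,
   cone_left_unit SA SM μ hμ, cone_right_unit SA SM μ hμ, cone_assoc SA SM μ hμ,
   cone_mul_mem SA SM μ hμ, cone_gcomm SA SM μ hμ,
   cone_d_mem SA SM g hg_deg, cone_d_sq SA SM g hg_d,
   cone_leibniz SA SM μ hμ g hg_deg hg_smul hg_bal⟩


end ConeCDGA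

section Detect

variable {A : Type} [Ring A] [Algebra ℚ A] {SA : CDGAStruct A}
variable {M : Type} [AddCommGroup M] [Module ℚ M] {SM : DGModStruct SA M}
variable {D : Type} [AddCommGroup D] [Module ℚ D] {SD : DGModStruct SA D}
variable {n : ℤ}

lemma detect_left (dual : DualRep SA SM n SD) (z : D)
    (h : ∀ (j : ℤ), ∀ p ∈ SM.gr j, dual.pair z p = 0) : z = 0 := by
  obtain ⟨c, hc, hsum⟩ := exists_decomp SD.internal z
  have hcomp : ∀ q : ℤ, c q = 0 := by
    intro q
    refine dual.nondeg (c q) (hc q) (fun x hx => ?_)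
    have hz := h (n - q) x hx
    rw [← hsum, Finsupp.sum, map_sum, LinearMap.sum_apply] at hz
    rwa [Finset.sum_eq_single q
      (fun b _ hb => dual.pair_deg (hc b) hx (by omega))
      (fun hq => by rw [Finsupp.notMem_support_iff.1 hq, map_zero, LinearMap.zero_apply])] at hz
  rw [← hsum, Finsupp.sum]
  exact Finset.sum_eq_zero (fun j _ => hcomp j)

lemma detect_right (dual : DualRep SA SM n SD) (x : M)
    (h : ∀ (j : ℤ), ∀ z ∈ SD.gr j, dual.pair z x = 0) : x = 0 := by
  obtain ⟨c, hc, hsum⟩ := exists_decomp SM.internal x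
  have hcomp : ∀ q : ℤ, c q = 0 := by
    intro q
    by_contra hne
    obtain ⟨l, hl⟩ : ∃ l : M →ₗ[ℚ] ℚ, l (c q) ≠ 0 := by
      by_contra hall
      push_neg at hall
      exact hne ((Module.forall_dual_apply_eq_zero_iff ℚ (c q)).1 hall)
    obtain ⟨z, hz, hzp⟩ := dual.surj (n - q) l
    have hmem : c q ∈ SM.gr (n - (n - q)) := by
      have hq : n - (n - q) = q := by ring
      rw [hq]; exact hc q
    have hxq : dual.pair z x = l (c q) := by
      rw [← hsum, Finsupp.sum, map_sum]
      rw [Finset.sum_eq_single q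
        (fun b _ hb => dual.pair_deg hz (hc b) (by omega))
        (fun hq => by rw [Finsupp.notMem_support_iff.1 hq, map_zero])]
      exact hzp (c q) hmem
    rw [h (n - q) z hz] at hxq
    exact hl hxq.symm
  rw [← hsum, Finsupp.sum]
  exact Finset.sum_eq_zero (fun j _ => hcomp j)

end Detect


/-- Let `φ : P → Q` be a morphism of connected CDGAs with `P`
a Poincaré duality CDGA in dimension `n`, let
`φ^! := θ_P⁻¹ ∘ (s^{-n}#φ) : s^{-n}#Q → P`, and assume `φ ∘ φ^!` is balanced.
Then the mapping cones `P ⊕_{φ^!} ss^{-n}#Q` and `Q ⊕_{φφ^!} ss^{-n}#Q`, each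
equipped with the semi-trivial structure, are CDGAs, and the map
`φ ⊕ id : (p, sx) ↦ (φ(p), sx)` is a morphism of CDGAs. -/
theorem statement4 {P Q D DQ : Type}
    [Ring P] [Algebra ℚ P] [Ring Q] [Algebra ℚ Q]
    [AddCommGroup D] [Module ℚ D] [AddCommGroup DQ] [Module ℚ DQ]
    (SP : CDGAStruct P) (SQ : CDGAStruct Q) (n : ℕ)
    (hPconn : SP.Connected) (hPft : SP.FiniteType) (hQconn : SQ.Connected)
    (SPm : DGModStruct SP P) (hself : IsSelfMod SP SPm)
    (SD : DGModStruct SP D) (dualP : DualRep SP SPm (n : ℤ) SD)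
    (θ : P →ₗ[ℚ] D) (hθ : IsDGModHom SPm SD θ) (hθbij : Function.Bijective θ)
    (φ : P →ₗ[ℚ] Q) (hφ : IsCDGAHom SP SQ φ)
    (SQself : DGModStruct SQ Q) (hQself : IsSelfMod SQ SQself)
    (SQP : DGModStruct SP Q) (hQP : IsModViaHom SP SQ φ SQself SQP)
    (SDQ : DGModStruct SP DQ) (dualQ : DualRep SP SQP (n : ℤ) SDQ)
    (ψ : DQ →ₗ[ℚ] D)
    (hψ : ∀ (x : DQ) (p : P), dualP.pair (ψ x) p = dualQ.pair x (φ p))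
    (sh : DQ →ₗ[ℚ] P) (hsh : θ ∘ₗ sh = ψ)
    (SDQQ : DGModStruct SQ DQ) (hDQQ : IsModViaHom SP SQ φ SDQQ SDQ)
    (hbal : IsBalanced SQ SDQQ (φ ∘ₗ sh))
    -- the semi-trivial products on the two mapping cones
    (μP : P × DQ →ₗ[ℚ] P × DQ →ₗ[ℚ] P × DQ) (hμP : SemiTrivialMul SP SDQ μP)
    (μQ : Q × DQ →ₗ[ℚ] Q × DQ →ₗ[ℚ] Q × DQ) (hμQ : SemiTrivialMul SQ SDQQ μQ) :
    IsGCDGA (coneGr SP SDQ) ((1 : P), (0 : DQ)) μP (coneD SP SDQ sh) ∧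
    IsGCDGA (coneGr SQ SDQQ) ((1 : Q), (0 : DQ)) μQ (coneD SQ SDQQ (φ ∘ₗ sh)) ∧
    IsGradedDGAHom (coneGr SP SDQ) ((1 : P), (0 : DQ)) μP (coneD SP SDQ sh)
      (coneGr SQ SDQQ) ((1 : Q), (0 : DQ)) μQ (coneD SQ SDQQ (φ ∘ₗ sh))
      (φ.prodMap LinearMap.id) := by
  classical
  obtain ⟨hφ1, hφmul, hφgr, hφd⟩ := hφ
  obtain ⟨hPmgr, hPmsmul, hPmd⟩ := hself
  obtain ⟨hQsgr, hQssmul, hQsd⟩ := hQself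
  obtain ⟨hQPgr0, hQPsmul0, hQPd0⟩ := hQP
  obtain ⟨hDQgr, hDQsmul, hDQd⟩ := hDQQ
  obtain ⟨hθgr, hθsmul, hθd⟩ := hθ
  have hQPgr : ∀ j, SQP.gr j = SQ.grZ j := fun j => (hQPgr0 j).trans (hQsgr j)
  have hQPsmul : ∀ (a : P) (q : Q), SQP.smul a q = φ a * q :=
    fun a q => (hQPsmul0 a q).trans (hQssmul (φ a) q)
  have hQPd : ∀ q : Q, SQP.d q = SQ.d q := fun q => (hQPd0 q).trans (hQsd q)
  have hφZ : ∀ (j : ℤ) (a : P), a ∈ SP.grZ j → φ a ∈ SQ.grZ j := by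
    intro j a ha
    rcases SP.mem_grZ_cases ha with ⟨hj, ha'⟩ | ⟨hj, rfl⟩
    · have h2 := SQ.mem_grZ_of_nat (hφgr j.toNat a ha')
      rwa [Int.toNat_of_nonneg hj] at h2
    · rw [map_zero]; exact Submodule.zero_mem _
  have hshp : ∀ (x : DQ) (p : P), dualP.pair (θ (sh x)) p = dualQ.pair x (φ p) := by
    intro x p
    have h := LinearMap.congr_fun hsh x
    rw [show θ (sh x) = ψ x from h]
    exact hψ x p
  -- degree of sh
  have hshmem : ∀ (s : ℤ), ∀ m ∈ SDQ.gr s, sh m ∈ SP.grZ s := by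
    intro s m hm
    obtain ⟨c, hc, hsum⟩ := exists_decomp SP.internalZ (sh m)
    have hck : ∀ k : ℤ, k ≠ s → c k = 0 := by
      intro k hk
      have hz : θ (c k) = 0 := by
        refine dualP.nondeg (θ (c k)) (hθgr k (c k) (by rw [hPmgr]; exact hc k))
          (fun p hp => ?_)
        have hpair : dualP.pair (θ (sh m)) p = dualP.pair (θ (c k)) p := by
          rw [← hsum, Finsupp.sum, map_sum, map_sum, LinearMap.sum_apply]
          exact Finset.sum_eq_single k
            (fun b _ hb => dualP.pair_deg
              (hθgr b (c b) (by rw [hPmgr]; exact hc b)) hp (by omega))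
            (fun hknot => by
              rw [Finsupp.notMem_support_iff.1 hknot, map_zero, map_zero,
                LinearMap.zero_apply])
        rw [← hpair, hshp]
        have hmem : φ p ∈ SQP.gr ((n:ℤ) - k) := by
          rw [hQPgr]
          exact hφZ _ p (by rw [← hPmgr]; exact hp)
        exact dualQ.pair_deg hm hmem (by omega)
      exact hθbij.1 (by rw [hz, map_zero])
    have hcs : sh m = c s := by
      rw [← hsum, Finsupp.sum]
      exact Finset.sum_eq_single s (fun b _ hb => hck b hb)
        (fun hs => Finsupp.notMem_support_iff.1 hs)
    rw [hcs]; exact hc s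
  have hθsh : ∀ (s : ℤ), ∀ m ∈ SDQ.gr s, θ (sh m) ∈ SD.gr s := by
    intro s m hm
    exact hθgr s (sh m) (by rw [hPmgr]; exact hshmem s m hm)
  -- sh is a chain map
  have hshdH : ∀ (s : ℤ), ∀ m ∈ SDQ.gr s, sh (SDQ.d m) = SP.d (sh m) := by
    intro s m hm
    apply hθbij.1
    have h1 : ∀ (j : ℤ), ∀ p ∈ SPm.gr j,
        dualP.pair (θ (sh (SDQ.d m)) - θ (SP.d (sh m))) p = 0 := by
      intro j p hp
      have e1 : dualP.pair (θ (sh (SDQ.d m))) p = dualQ.pair (SDQ.d m) (φ p) := hshp _ _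
      have e2 : dualQ.pair (SDQ.d m) (φ p)
          = -(((-1:ℚ)^s) * dualQ.pair m (SQP.d (φ p))) := dualQ.d_pair m (φ p) hm
      have e3 : SQP.d (φ p) = φ (SP.d p) := by rw [hQPd, ← hφd]
      have e4 : dualP.pair (θ (SP.d (sh m))) p
          = -(((-1:ℚ)^s) * dualP.pair (θ (sh m)) (SPm.d p)) := by
        have h5 : θ (SP.d (sh m)) = SD.d (θ (sh m)) := by rw [← hPmd, hθd]
        rw [h5]
        exact dualP.d_pair (θ (sh m)) p (hθsh s m hm)
      rw [map_sub, LinearMap.sub_apply, e1, e2, e3, e4, hPmd, hshp]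
      ring
    exact sub_eq_zero.1 (detect_left dualP _ h1)
  have hshd : ∀ m, sh (SDQ.d m) = SP.d (sh m) := by
    refine homog_induction SDQ.internal
      (Pr := fun m => sh (SDQ.d m) = SP.d (sh m))
      (fun s m hm => hshdH s m hm) (by simp) (fun x y px py => by
        show sh (SDQ.d (x + y)) = SP.d (sh (x + y))
        rw [map_add, map_add, px, py, map_add, map_add]) (fun c x px => by
        show sh (SDQ.d (c • x)) = SP.d (sh (c • x))
        rw [map_smul, map_smul, px, map_smul, map_smul])
  -- zpow version of dualQ.smul_pair
  have hQpairs : ∀ (σ : ℤ) (a : P), a ∈ SP.grZ σ → ∀ (p : ℤ) (z : DQ), z ∈ SDQ.gr p →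
      ∀ x : Q, dualQ.pair (SDQ.smul a z) x = ((-1:ℚ)^(σ*p)) * dualQ.pair z (φ a * x) := by
    intro σ a ha p z hz x
    rcases SP.mem_grZ_cases ha with ⟨hσ, ha'⟩ | ⟨hσ, rfl⟩
    · have h := dualQ.smul_pair a z x ha' hz
      rw [hQPsmul] at h
      rw [show σ = ((σ.toNat : ℕ) : ℤ) from by omega]
      exact h
    · simp
  -- sh is P-linear (homogeneous case)
  have hshsmH : ∀ (σ : ℤ) (a : P), a ∈ SP.grZ σ → ∀ (s : ℤ), ∀ m ∈ SDQ.gr s,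
      sh (SDQ.smul a m) = a * sh m := by
    intro σ a ha s m hm
    apply hθbij.1
    have h1 : ∀ (j : ℤ), ∀ p ∈ SPm.gr j,
        dualP.pair (θ (sh (SDQ.smul a m)) - θ (a * sh m)) p = 0 := by
      intro j p hp
      have e1 : dualP.pair (θ (sh (SDQ.smul a m))) p = dualQ.pair (SDQ.smul a m) (φ p) :=
        hshp _ _
      have e2 := hQpairs σ a ha s m hm (φ p)
      have e3 : θ (a * sh m) = SD.smul a (θ (sh m)) := by rw [← hPmsmul, hθsmul]
      have e4 : dualP.pair (SD.smul a (θ (sh m))) p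
          = ((-1:ℚ)^(σ*s)) * dualP.pair (θ (sh m)) (a * p) := by
        rcases SP.mem_grZ_cases ha with ⟨hσ, ha'⟩ | ⟨hσ, h0⟩
        · have h := dualP.smul_pair a (θ (sh m)) p ha' (hθsh s m hm)
          rw [hPmsmul] at h
          rw [show σ = ((σ.toNat : ℕ) : ℤ) from by omega]
          exact h
        · rw [h0]; simp
      rw [map_sub, LinearMap.sub_apply, e1, e2, e3, e4, hshp, ← hφmul]
      ring
    exact sub_eq_zero.1 (detect_left dualP _ h1)
  have hshsmul : ∀ (a : P) (m : DQ), sh (SDQ.smul a m) = a * sh m := by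
    have Hm : ∀ (σ : ℤ) (a : P), a ∈ SP.grZ σ → ∀ m, sh (SDQ.smul a m) = a * sh m := by
      intro σ a ha
      refine homog_induction SDQ.internal
        (Pr := fun m => sh (SDQ.smul a m) = a * sh m)
        (fun s m hm => hshsmH σ a ha s m hm) (by simp) (fun x y px py => by
          show sh (SDQ.smul a (x + y)) = a * sh (x + y)
          rw [map_add, map_add, px, py, map_add, mul_add]) (fun c x px => by
          show sh (SDQ.smul a (c • x)) = a * sh (c • x)
          rw [map_smul, map_smul, px, map_smul, mul_smul_comm])
    exact fun a => homog_induction SP.internalZ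
      (Pr := fun a => ∀ m, sh (SDQ.smul a m) = a * sh m)
      (fun σ a ha => Hm σ a ha) (by intro m; simp) (fun x y px py m => by
        have h1 : SDQ.smul (x + y) m = SDQ.smul x m + SDQ.smul y m := by
          rw [map_add, LinearMap.add_apply]
        rw [h1, map_add, px m, py m, add_mul]) (fun c x px m => by
        have h1 : SDQ.smul (c • x) m = c • SDQ.smul x m := by
          rw [map_smul, LinearMap.smul_apply]
        rw [h1, map_smul, px m, smul_mul_assoc]) a
  have hshbal : ∀ (i j : ℤ) (x y : DQ), x ∈ SDQ.gr i → y ∈ SDQ.gr j →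
      SDQ.smul (sh x) y = ((-1:ℚ)^(i*j)) • SDQ.smul (sh y) x := by
    intro i j x y hx hy
    have h1 : SDQ.smul (sh x) y = SDQQ.smul ((φ ∘ₗ sh) x) y := hDQsmul (sh x) y
    have h2 := hbal i j x y (by rw [← hDQgr]; exact hx) (by rw [← hDQgr]; exact hy)
    rw [h1, h2]
    simp only [LinearMap.coe_comp, Function.comp_apply]
    rw [← hDQsmul]
  have hfdeg : ∀ (j : ℤ), ∀ m ∈ SDQQ.gr j, (φ ∘ₗ sh) m ∈ SQ.grZ j := by
    intro j m hm
    exact hφZ j (sh m) (hshmem j m (by rw [hDQgr]; exact hm))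
  have hfd : ∀ m, (φ ∘ₗ sh) (SDQQ.d m) = SQ.d ((φ ∘ₗ sh) m) := by
    intro m
    show φ (sh (SDQQ.d m)) = SQ.d (φ (sh m))
    rw [← hDQd, hshd, hφd]
  -- Q-linearity of φ ∘ sh (the key step)
  have hfs : ∀ (β : ℤ) (b : Q), b ∈ SQ.grZ β → ∀ (s : ℤ) (m : DQ), m ∈ SDQ.gr s →
      (φ ∘ₗ sh) (SDQQ.smul b m) = b * (φ ∘ₗ sh) m := by
    intro β b hb s m hm
    have hmQ : m ∈ SDQQ.gr s := by rw [← hDQgr]; exact hm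
    have hw : SDQQ.smul b m ∈ SDQ.gr (β + s) := by
      rw [hDQgr]; exact smul_memZ SQ SDQQ hb hmQ
    have hwQ : SDQQ.smul b m ∈ SDQQ.gr (β + s) := by rw [← hDQgr]; exact hw
    -- step 1: as operators on DQ, sh (b·m) acts as b * φ(sh m)
    have hAy : ∀ (t : ℤ) (y : DQ), y ∈ SDQ.gr t →
        SDQ.smul (sh (SDQQ.smul b m)) y = SDQQ.smul (b * φ (sh m)) y := by
      intro t y hy
      have hyQ : y ∈ SDQQ.gr t := by rw [← hDQgr]; exact hy
      have e5 : φ (sh y) * b = ((-1:ℚ)^(t*β)) • (b * φ (sh y)) :=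
        SQ.gcommZ (hφZ t (sh y) (hshmem t y hy)) hb
      calc SDQ.smul (sh (SDQQ.smul b m)) y
          = SDQQ.smul ((φ ∘ₗ sh) (SDQQ.smul b m)) y := hDQsmul _ y
        _ = ((-1:ℚ)^((β+s)*t)) • SDQQ.smul ((φ ∘ₗ sh) y) (SDQQ.smul b m) :=
            hbal (β+s) t (SDQQ.smul b m) y hwQ hyQ
        _ = ((-1:ℚ)^((β+s)*t)) • SDQQ.smul (φ (sh y) * b) m := by
            rw [SDQQ.mul_smul]; rfl
        _ = ((-1:ℚ)^((β+s)*t)) • (((-1:ℚ)^(t*β)) • SDQQ.smul (b * φ (sh y)) m) := by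
            rw [e5, map_smul, LinearMap.smul_apply]
        _ = ((-1:ℚ)^((β+s)*t)) • (((-1:ℚ)^(t*β)) •
              SDQQ.smul b (SDQQ.smul ((φ ∘ₗ sh) y) m)) := by
            rw [SDQQ.mul_smul]; rfl
        _ = ((-1:ℚ)^((β+s)*t)) • (((-1:ℚ)^(t*β)) •
              SDQQ.smul b (((-1:ℚ)^(t*s)) • SDQQ.smul ((φ ∘ₗ sh) m) y)) := by
            rw [hbal t s y m hyQ hmQ]
        _ = ((-1:ℚ)^((β+s)*t) * ((-1:ℚ)^(t*β) * (-1:ℚ)^(t*s))) •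
              SDQQ.smul b (SDQQ.smul ((φ ∘ₗ sh) m) y) := by
            rw [map_smul, smul_smul, smul_smul, mul_assoc]
        _ = SDQQ.smul b (SDQQ.smul (φ (sh m)) y) := by
            rw [← sgn_add, ← sgn_add,
              sgn_congr (a := (β+s)*t + (t*β + t*s)) (b := 0) (t*(β+s)) (by ring),
              zpow_zero, one_smul]
            rfl
        _ = SDQQ.smul (b * φ (sh m)) y := (SDQQ.mul_smul b (φ (sh m)) y).symm
    -- step 2: b * φ (sh m) lies in the image of φ
    have hphim : φ (sh m) ∈ SQ.grZ s := hφZ s (sh m) (hshmem s m hm)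
    have hbf : b * φ (sh m) ∈ SQ.grZ (β + s) := SQ.mul_memZ hb hphim
    have hC : b * φ (sh m) ∈ Submodule.map φ (SP.grZ (β + s)) := by
      by_contra hq
      set W := Submodule.map φ (SP.grZ (β + s)) with hWdef
      have hmk : W.mkQ (b * φ (sh m)) ≠ 0 := by
        intro h0
        exact hq ((Submodule.Quotient.mk_eq_zero W).1 h0)
      obtain ⟨l0, hl0⟩ : ∃ l0 : (Q ⧸ W) →ₗ[ℚ] ℚ, l0 (W.mkQ (b * φ (sh m))) ≠ 0 := by
        by_contra hall; push_neg at hall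
        exact hmk ((Module.forall_dual_apply_eq_zero_iff ℚ _).1 hall)
      obtain ⟨y, hygr, hyp⟩ := dualQ.surj ((n:ℤ) - (β + s)) (l0 ∘ₗ W.mkQ)
      have hyp' : ∀ x ∈ SQ.grZ (β + s), dualQ.pair y x = l0 (W.mkQ x) := by
        intro x hx
        have hx2 : x ∈ SQP.gr ((n:ℤ) - ((n:ℤ) - (β + s))) := by
          rw [hQPgr, show (n:ℤ) - ((n:ℤ) - (β+s)) = β + s from by ring]
          exact hx
        exact hyp x hx2
      have hshy : sh y = 0 := by
        apply hθbij.1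
        rw [map_zero]
        refine detect_left dualP (θ (sh y)) (fun j p hp => ?_)
        rw [hshp]
        have hφp : φ p ∈ SQ.grZ j := hφZ _ p (by rw [← hPmgr]; exact hp)
        by_cases hj : j = β + s
        · subst hj
          rw [hyp' (φ p) hφp]
          have hz0 : W.mkQ (φ p) = 0 := (Submodule.Quotient.mk_eq_zero W).2
            ⟨p, by rw [← hPmgr]; exact hp, rfl⟩
          rw [hz0, map_zero]
        · exact dualQ.pair_deg hygr (by rw [hQPgr]; exact hφp) (by omega)
      have hz : dualQ.pair y (b * φ (sh m)) = 0 := by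
        have e5 : b * φ (sh m) = ((-1:ℚ)^(β*s)) • (φ (sh m) * b) := SQ.gcommZ hb hphim
        have e6 := hQpairs s (sh m) (hshmem s m hm) ((n:ℤ)-(β+s)) y hygr b
        have e7 : SDQ.smul (sh m) y = 0 := by
          have h1 : SDQ.smul (sh m) y = SDQQ.smul ((φ ∘ₗ sh) m) y := hDQsmul _ y
          have h2 := hbal s ((n:ℤ)-(β+s)) m y hmQ (by rw [← hDQgr]; exact hygr)
          rw [h1, h2]
          simp only [LinearMap.coe_comp, Function.comp_apply]
          rw [hshy, map_zero, map_zero, LinearMap.zero_apply, smul_zero]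
        rw [e5, map_smul, smul_eq_mul]
        have e8 : dualQ.pair y (φ (sh m) * b) = 0 := by
          have := e6
          rw [e7, map_zero, LinearMap.zero_apply] at this
          have h9 := this.symm
          rcases mul_eq_zero.1 h9 with h | h
          · exact absurd h (sgn_ne_zero _)
          · exact h
        rw [e8, mul_zero]
      rw [hyp' _ hbf] at hz
      exact hl0 hz
    obtain ⟨c, hcgr, hc⟩ := hC
    -- step 3: compare pairings against everything
    have hgoal : ∀ (t : ℤ) (y : DQ), y ∈ SDQ.gr t →
        dualQ.pair y ((φ ∘ₗ sh) (SDQQ.smul b m) - b * φ (sh m)) = 0 := by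
      intro t y hy
      rw [map_sub]
      have e1 : dualQ.pair y ((φ ∘ₗ sh) (SDQQ.smul b m))
          = ((-1:ℚ)^((β+s)*t)) * dualQ.pair (SDQQ.smul (b * φ (sh m)) y) 1 := by
        have h6 := hQpairs (β+s) (sh (SDQQ.smul b m)) (hshmem _ _ hw) t y hy 1
        rw [hAy t y hy, mul_one] at h6
        show dualQ.pair y (φ (sh (SDQQ.smul b m))) = _
        rw [h6, ← mul_assoc, ← sgn_add,
          sgn_congr (a := (β+s)*t + (β+s)*t) (b := 0) ((β+s)*t) (by ring), zpow_zero, one_mul]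
      have e2 : dualQ.pair y (b * φ (sh m))
          = ((-1:ℚ)^((β+s)*t)) * dualQ.pair (SDQQ.smul (b * φ (sh m)) y) 1 := by
        have h6 := hQpairs (β+s) c hcgr t y hy 1
        have h7 : SDQ.smul c y = SDQQ.smul (b * φ (sh m)) y := by
          rw [hDQsmul, hc]
        rw [h7, hc, mul_one] at h6
        rw [h6, ← mul_assoc, ← sgn_add,
          sgn_congr (a := (β+s)*t + (β+s)*t) (b := 0) ((β+s)*t) (by ring), zpow_zero, one_mul]
      rw [e1, e2, sub_self]
    have hfin := detect_right dualQ _ (fun j z hz => hgoal j z hz)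
    exact sub_eq_zero.1 hfin
  have hfsmul : ∀ (bq : Q) (m : DQ), (φ ∘ₗ sh) (SDQQ.smul bq m) = bq * (φ ∘ₗ sh) m := by
    have Hm : ∀ (β : ℤ) (b : Q), b ∈ SQ.grZ β → ∀ m,
        (φ ∘ₗ sh) (SDQQ.smul b m) = b * (φ ∘ₗ sh) m := by
      intro β b hb
      refine homog_induction SDQ.internal
        (Pr := fun m => (φ ∘ₗ sh) (SDQQ.smul b m) = b * (φ ∘ₗ sh) m)
        (fun s m hm => hfs β b hb s m hm) (by simp) (fun x y px py => by
          show (φ ∘ₗ sh) (SDQQ.smul b (x + y)) = b * (φ ∘ₗ sh) (x + y)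
          rw [map_add, map_add, px, py, map_add, mul_add]) (fun c x px => by
          show (φ ∘ₗ sh) (SDQQ.smul b (c • x)) = b * (φ ∘ₗ sh) (c • x)
          rw [map_smul, map_smul, px, map_smul, mul_smul_comm])
    exact fun b => homog_induction SQ.internalZ
      (Pr := fun b => ∀ m, (φ ∘ₗ sh) (SDQQ.smul b m) = b * (φ ∘ₗ sh) m)
      (fun β b hb => Hm β b hb) (by intro m; simp) (fun x y px py m => by
        have h1 : SDQQ.smul (x + y) m = SDQQ.smul x m + SDQQ.smul y m := by
          rw [map_add, LinearMap.add_apply]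
        rw [h1, map_add, px m, py m, add_mul]) (fun c x px m => by
        have h1 : SDQQ.smul (c • x) m = c • SDQQ.smul x m := by
          rw [map_smul, LinearMap.smul_apply]
        rw [h1, map_smul, px m, smul_mul_assoc]) b
  have hpm : ∀ (u : P) (v : DQ), (φ.prodMap LinearMap.id) (u, v) = (φ u, v) := fun u v => rfl
  refine ⟨cone_isGCDGA SP SDQ μP hμP sh hshmem hshd hshsmul hshbal,
          cone_isGCDGA SQ SDQQ μQ hμQ (φ ∘ₗ sh) hfdeg hfd hfsmul
            (fun i j x y hx hy => hbal i j x y hx hy), ?_, ?_, ?_, ?_⟩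
  · show ((φ (1:P), (0:DQ)) : Q × DQ) = ((1:Q), (0:DQ))
    rw [hφ1]
  · -- multiplicativity
    intro x y
    revert y
    refine pure_induction SP SDQ
      (Pr := fun x => ∀ y, (φ.prodMap LinearMap.id) (μP x y)
        = μQ ((φ.prodMap LinearMap.id) x) ((φ.prodMap LinearMap.id) y)) ?_ ?_ (by simp [Prod.mk_zero_zero])
      (fun x x' px px' y => by
        simp only [map_add, LinearMap.add_apply]
        rw [px y, px' y])
      (fun c x px y => by
        simp only [map_smul, LinearMap.smul_apply]
        rw [px y]) x
    · intro σ a ha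
      refine pure_induction SP SDQ
        (Pr := fun y => (φ.prodMap LinearMap.id) (μP (a, 0) y)
          = μQ ((φ.prodMap LinearMap.id) (a, 0)) ((φ.prodMap LinearMap.id) y))
        ?_ ?_ (by simp [Prod.mk_zero_zero]) (fun y y' py py' => by
          simp only [map_add]
          rw [py, py'])
        (fun c y py => by
          simp only [map_smul]
          rw [py])
      · intro σ' a' ha'
        beta_reduce
        rw [hμP.1, hpm, hpm, hpm, hφmul, hμQ.1]
      · intro τ' m' hm'
        beta_reduce
        rw [mu_amZ SP SDQ μP hμP ha m', hpm, hpm, hpm, map_zero,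
          mu_amZ SQ SDQQ μQ hμQ (hφZ σ a ha) m', hDQsmul]
    · intro τ m hm
      refine pure_induction SP SDQ
        (Pr := fun y => (φ.prodMap LinearMap.id) (μP ((0:P), m) y)
          = μQ ((φ.prodMap LinearMap.id) ((0:P), m)) ((φ.prodMap LinearMap.id) y))
        ?_ ?_ (by simp [Prod.mk_zero_zero]) (fun y y' py py' => by
          simp only [map_add]
          rw [py, py'])
        (fun c y py => by
          simp only [map_smul]
          rw [py])
      · intro σ' a' ha'
        beta_reduce
        rw [mu_maZ SP SDQ μP hμP ha' hm, hpm, hpm, hpm, map_zero,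
          mu_maZ SQ SDQQ μQ hμQ (hφZ σ' a' ha') (show m ∈ SDQQ.gr τ by rw [← hDQgr]; exact hm),
          hDQsmul]
      · intro τ' m' hm'
        beta_reduce
        rw [hμP.2.2.2, map_zero, hpm, hpm, map_zero, hμQ.2.2.2]
  · -- graded
    intro j x hx
    obtain ⟨h1, h2⟩ := cone_mem SP SDQ hx
    exact ⟨hφZ j x.1 h1, by rw [← hDQgr]; exact h2⟩
  · -- differential
    intro x
    show ((φ (SP.d x.1 + sh x.2), -(SDQ.d x.2)) : Q × DQ)
      = (SQ.d (φ x.1) + (φ ∘ₗ sh) x.2, -(SDQQ.d x.2))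
    rw [map_add, hφd, hDQd]
    rfl
end

section
/- Let φ: P → Q be a surjective morphism of connected CDGAs with P a Poincaré duality CDGA in dimension n, Q of finite type, and let φ! := θ_P^{-1} ∘ (s^{-n}#φ) : s^{-n}#Q → P; assume φ∘φ! is balanced. Then: (1) φ! is injective; (2) I := φ!(s^{-n}#Q) is a differential ideal of P; and (3) the projection π = (proj, 0) : P ⊕_{φ!} ss^{-n}#Q → P/I is a quasi-isomorphism of CDGAs, where the mapping cone carries the semi-trivial CDGA structure. -/
section helpers
variable {ι : Type} [DecidableEq ι] {M : Type} [AddCommGroup M] [Module ℚ M]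

lemma decomp_exists {gr : ι → Submodule ℚ M} (h : DirectSum.IsInternal gr) (x : M) :
    ∃ (s : Finset ι) (c : ι → M), (∀ i, c i ∈ gr i) ∧ (∀ i ∉ s, c i = 0) ∧ x = ∑ i ∈ s, c i := by
  classical
  obtain ⟨v, hv⟩ := h.surjective x
  refine ⟨v.support, fun i => (v i : M), fun i => (v i).2, ?_, ?_⟩
  · intro i hi
    show ((v i : gr i) : M) = 0
    rw [DFinsupp.notMem_support_iff.mp hi]; rfl
  · conv_lhs => rw [← hv, ← DirectSum.sum_support_of v]
    rw [map_sum]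
    simp

lemma decomp_zero {gr : ι → Submodule ℚ M} (h : DirectSum.IsInternal gr)
    {s : Finset ι} {c : ι → M} (hc : ∀ i, c i ∈ gr i) (hsum : ∑ i ∈ s, c i = 0) :
    ∀ i ∈ s, c i = 0 := by
  classical
  set v : DirectSum ι fun i => gr i :=
    ∑ i ∈ s, DirectSum.of (fun i => gr i) i ⟨c i, hc i⟩ with hvdef
  have hv0 : v = 0 := by
    apply h.injective
    rw [map_zero, hvdef, map_sum]
    simpa using hsum
  intro i hi
  have h1 : ((v i : gr i) : M) = 0 := by rw [hv0]; rfl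
  rw [hvdef, DFinsupp.finset_sum_apply] at h1
  rw [Finset.sum_eq_single_of_mem i hi (fun j hj hji => by
    rw [DirectSum.of_eq_of_ne _ _ _ hji.symm]), DirectSum.of_eq_same] at h1
  exact h1
end helpers

/-- Let `φ : P → Q` be a surjective morphism of connected
CDGAs with `P` a Poincaré duality CDGA in dimension `n`, `Q` of finite type,
and let `φ^! := θ_P⁻¹ ∘ (s^{-n}#φ) : s^{-n}#Q → P`; assume `φ ∘ φ^!` is
balanced. Then: (1) `φ^!` is injective; (2) `I := φ^!(s^{-n}#Q)` is a
differential ideal of `P`; and (3) the projection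
`π = (proj, 0) : P ⊕_{φ^!} ss^{-n}#Q → P/I` is a quasi-isomorphism of CDGAs,
where the mapping cone carries the semi-trivial CDGA structure. (The quotient
`P/I` is presented by any surjective CDGA morphism `proj : P → R` with kernel
`I`.) -/
theorem statement5 {P Q D DQ R : Type}
    [Ring P] [Algebra ℚ P] [Ring Q] [Algebra ℚ Q] [Ring R] [Algebra ℚ R]
    [AddCommGroup D] [Module ℚ D] [AddCommGroup DQ] [Module ℚ DQ]
    (SP : CDGAStruct P) (SQ : CDGAStruct Q) (n : ℕ)
    (hPconn : SP.Connected) (hPft : SP.FiniteType) (hQconn : SQ.Connected)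
    (hQft : SQ.FiniteType)
    (SPm : DGModStruct SP P) (hself : IsSelfMod SP SPm)
    (SD : DGModStruct SP D) (dualP : DualRep SP SPm (n : ℤ) SD)
    (θ : P →ₗ[ℚ] D) (hθ : IsDGModHom SPm SD θ) (hθbij : Function.Bijective θ)
    (φ : P →ₗ[ℚ] Q) (hφ : IsCDGAHom SP SQ φ) (hφsurj : Function.Surjective φ)
    (SQself : DGModStruct SQ Q) (hQself : IsSelfMod SQ SQself)
    (SQP : DGModStruct SP Q) (hQP : IsModViaHom SP SQ φ SQself SQP)
    (SDQ : DGModStruct SP DQ) (dualQ : DualRep SP SQP (n : ℤ) SDQ)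
    (ψ : DQ →ₗ[ℚ] D)
    (hψ : ∀ (x : DQ) (p : P), dualP.pair (ψ x) p = dualQ.pair x (φ p))
    (sh : DQ →ₗ[ℚ] P) (hsh : θ ∘ₗ sh = ψ)
    (SDQQ : DGModStruct SQ DQ) (hDQQ : IsModViaHom SP SQ φ SDQQ SDQ)
    (hbal : IsBalanced SQ SDQQ (φ ∘ₗ sh))
    (μP : P × DQ →ₗ[ℚ] P × DQ →ₗ[ℚ] P × DQ) (hμP : SemiTrivialMul SP SDQ μP)
    -- a presentation of the quotient CDGA `P/I`, `I = φ^!(s^{-n}#Q)`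
    (SR : CDGAStruct R) (proj : P →ₗ[ℚ] R) (hproj : IsCDGAHom SP SR proj)
    (hprojsurj : Function.Surjective proj)
    (hker : LinearMap.ker proj = LinearMap.range sh) :
    Function.Injective sh ∧
    (∀ x ∈ LinearMap.range sh, SP.d x ∈ LinearMap.range sh ∧
      ∀ p : P, p * x ∈ LinearMap.range sh ∧ x * p ∈ LinearMap.range sh) ∧
    IsGradedDGAHom (coneGr SP SDQ) ((1 : P), (0 : DQ)) μP (coneD SP SDQ sh)
      SR.grZ 1 (LinearMap.mul ℚ R) SR.d (proj ∘ₗ LinearMap.fst ℚ P DQ) ∧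
    IsQuasiIsoGr (coneGr SP SDQ) (coneD SP SDQ sh) SR.grZ SR.d
      (proj ∘ₗ LinearMap.fst ℚ P DQ) := by
  classical
  -- basic unfoldings
  obtain ⟨hφ1, hφmul, hφgr, hφd⟩ := hφ
  obtain ⟨hproj1, hprojmul, hprojgr, hprojd⟩ := hproj
  obtain ⟨hθgr, hθsmul, hθd⟩ := hθ
  obtain ⟨hselfgr, hselfsmul, hselfd⟩ := hself
  obtain ⟨hQselfgr, hQselfsmul, hQselfd⟩ := hQself
  obtain ⟨hQPgr, hQPsmul, hQPd⟩ := hQP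
  have hθsh : ∀ u : DQ, θ (sh u) = ψ u := fun u => LinearMap.congr_fun hsh u
  -- φ maps the ℤ-grading of P into SQP's grading
  have hQPgrZ : ∀ j : ℤ, SQP.gr j = SQ.grZ j := by
    intro j; rw [hQPgr j, hQselfgr j]
  have hφ_grZ : ∀ (j : ℤ), ∀ y ∈ SP.grZ j, φ y ∈ SQP.gr j := by
    intro j y hy
    rw [hQPgrZ]
    unfold CDGAStruct.grZ at hy ⊢
    by_cases h : 0 ≤ j
    · simp only [if_pos h] at hy ⊢
      exact hφgr _ y hy
    · simp only [if_neg h, Submodule.mem_bot] at hy ⊢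
      simp [hy]
  have hd_grZ : ∀ (j : ℤ), ∀ a ∈ SP.grZ j, SP.d a ∈ SP.grZ (j + 1) := by
    intro j a ha
    unfold CDGAStruct.grZ at ha ⊢
    by_cases h : 0 ≤ j
    · have h1 : (0 : ℤ) ≤ j + 1 := by omega
      have h2 : (j + 1).toNat = j.toNat + 1 := by omega
      simp only [if_pos h] at ha
      simp only [if_pos h1, h2]
      exact SP.d_mem ha
    · simp only [if_neg h, Submodule.mem_bot] at ha
      by_cases h1 : 0 ≤ j + 1
      · simp only [if_pos h1, ha, map_zero]; exact Submodule.zero_mem _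
      · simp only [if_neg h1, Submodule.mem_bot, ha, map_zero]
  have hSPmgr : ∀ j : ℤ, SPm.gr j = SP.grZ j := hselfgr
  -- extensionality in D via the pairing
  have hD_ext : ∀ (k : ℤ) (f g : D), f ∈ SD.gr k → g ∈ SD.gr k →
      (∀ y ∈ SPm.gr (n - k), dualP.pair f y = dualP.pair g y) → f = g := by
    intro k f g hfk hgk hpq
    have h0 : f - g = 0 := by
      apply dualP.nondeg (f - g) (Submodule.sub_mem _ hfk hgk)
      intro y hy
      rw [map_sub, LinearMap.sub_apply, hpq y hy, sub_self]
    linear_combination (norm := abel) h0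
  -- ψ preserves the grading
  have hψ_gr : ∀ (k : ℤ), ∀ u ∈ SDQ.gr k, ψ u ∈ SD.gr k := by
    intro k u hu
    obtain ⟨s, c, hc, hc0, hsum⟩ := decomp_exists SD.internal (ψ u)
    have hzero : ∀ m, m ≠ k → c m = 0 := by
      intro m hm
      by_cases hms : m ∈ s
      · apply dualP.nondeg (c m) (hc m)
        intro y hy
        have hsumpair : dualP.pair (ψ u) y = dualP.pair (c m) y := by
          rw [hsum, map_sum, LinearMap.sum_apply]
          exact Finset.sum_eq_single_of_mem m hms (fun j hj hjm => by
            exact dualP.pair_deg (hc j) hy (by omega))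
        rw [← hsumpair, hψ u y]
        exact dualQ.pair_deg hu (hφ_grZ _ y (by rw [← hSPmgr]; exact hy)) (by omega)
      · exact hc0 m hms
    rw [hsum]
    apply Submodule.sum_mem
    intro m _
    by_cases hmk : m = k
    · exact hmk ▸ hc m
    · rw [hzero m hmk]; exact Submodule.zero_mem _
  -- injectivity of ψ, hence of sh
  have hψ_inj : Function.Injective ψ := by
    rw [injective_iff_map_eq_zero]
    intro x hx
    obtain ⟨s, c, hc, hc0, hsum⟩ := decomp_exists SDQ.internal x
    have hzero : ∀ j, c j = 0 := by
      intro j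
      by_cases hjs : j ∈ s
      · apply dualQ.nondeg (c j) (hc j)
        intro y hy
        obtain ⟨p, rfl⟩ := hφsurj y
        have : dualQ.pair x (φ p) = dualQ.pair (c j) (φ p) := by
          rw [hsum, map_sum, LinearMap.sum_apply]
          exact Finset.sum_eq_single_of_mem j hjs (fun m hm hmj => by
            exact dualQ.pair_deg (hc m) hy (by omega))
        rw [← this, ← hψ, hx, map_zero, LinearMap.zero_apply]
      · exact hc0 j hjs
    rw [hsum]
    exact Finset.sum_eq_zero (fun j _ => hzero j)
  have hsh_inj : Function.Injective sh := by
    intro a b hab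
    apply hψ_inj
    rw [← hθsh, ← hθsh, hab]
  -- sh preserves the grading
  have hsh_gr : ∀ (k : ℤ), ∀ u ∈ SDQ.gr k, sh u ∈ SP.grZ k := by
    intro k u hu
    obtain ⟨s, c, hc, hc0, hsum⟩ := decomp_exists SPm.internal (sh u)
    have hzero : ∀ m, m ≠ k → c m = 0 := by
      intro m hm
      by_cases hms : m ∈ s
      · apply hθbij.injective
        rw [map_zero]
        apply dualP.nondeg (θ (c m)) (hθgr m (c m) (hc m))
        intro y hy
        have hsumpair : dualP.pair (θ (sh u)) y = dualP.pair (θ (c m)) y := by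
          rw [hsum, map_sum, map_sum, LinearMap.sum_apply]
          exact Finset.sum_eq_single_of_mem m hms (fun j hj hjm => by
            exact dualP.pair_deg (hθgr j (c j) (hc j)) hy (by omega))
        rw [← hsumpair, hθsh]
        exact dualP.pair_deg (hψ_gr k u hu) hy (by omega)
      · exact hc0 m hms
    rw [← hSPmgr, hsum]
    apply Submodule.sum_mem
    intro m _
    by_cases hmk : m = k
    · exact hmk ▸ hc m
    · rw [hzero m hmk]; exact Submodule.zero_mem _
  -- sh reflects the grading
  have hsh_gr_rev : ∀ (k : ℤ) (u : DQ), sh u ∈ SP.grZ k → u ∈ SDQ.gr k := by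
    intro k u hu
    obtain ⟨s, c, hc, hc0, hsum⟩ := decomp_exists SDQ.internal u
    have hzero : ∀ m, m ≠ k → c m = 0 := by
      intro m hm
      by_cases hms : m ∈ s
      · apply hψ_inj
        rw [map_zero]
        apply dualP.nondeg (ψ (c m)) (hψ_gr m (c m) (hc m))
        intro y hy
        have hsumpair : dualP.pair (ψ u) y = dualP.pair (ψ (c m)) y := by
          rw [hsum, map_sum, map_sum, LinearMap.sum_apply]
          exact Finset.sum_eq_single_of_mem m hms (fun j hj hjm => by
            exact dualP.pair_deg (hψ_gr j (c j) (hc j)) hy (by omega))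
        rw [← hsumpair, ← hθsh]
        exact dualP.pair_deg (hθgr k (sh u) (by rw [hSPmgr]; exact hu)) hy (by omega)
      · exact hc0 m hms
    rw [hsum]
    apply Submodule.sum_mem
    intro m _
    by_cases hmk : m = k
    · exact hmk ▸ hc m
    · rw [hzero m hmk]; exact Submodule.zero_mem _
  -- sh is a chain map
  have hsh_d_hom : ∀ (k : ℤ), ∀ u ∈ SDQ.gr k, SP.d (sh u) = sh (SDQ.d u) := by
    intro k u hu
    apply hθbij.injective
    have h1 : θ (SP.d (sh u)) = SD.d (ψ u) := by
      rw [← hselfd, hθd, hθsh]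
    have h2 : θ (sh (SDQ.d u)) = ψ (SDQ.d u) := hθsh _
    rw [h1, h2]
    apply hD_ext (k + 1) _ _ (SD.d_mem (hψ_gr k u hu)) (hψ_gr (k + 1) _ (SDQ.d_mem hu))
    intro y hy
    rw [dualP.d_pair (ψ u) y (hψ_gr k u hu), hψ u, hψ (SDQ.d u),
      dualQ.d_pair u (φ y) hu, hselfd, hφd, hQPd, hQselfd]
  have hsh_d : ∀ u : DQ, SP.d (sh u) = sh (SDQ.d u) := by
    intro u
    obtain ⟨s, c, hc, hc0, rfl⟩ := decomp_exists SDQ.internal u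
    rw [map_sum, map_sum, map_sum, map_sum]
    exact Finset.sum_congr rfl (fun i _ => hsh_d_hom i (c i) (hc i))
  -- sh is a module map:  p * sh u = sh (p • u)
  have hsh_smul_hom : ∀ (i : ℕ) (p : P), p ∈ SP.gr i → ∀ (k : ℤ), ∀ u ∈ SDQ.gr k,
      p * sh u = sh (SDQ.smul p u) := by
    intro i p hp k u hu
    apply hθbij.injective
    have h1 : θ (p * sh u) = SD.smul p (ψ u) := by
      rw [← hselfsmul, hθsmul, hθsh]
    rw [h1, hθsh]
    apply hD_ext (i + k) _ _ (SD.smul_mem hp (hψ_gr k u hu))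
      (hψ_gr (i + k) _ (SDQ.smul_mem hp hu))
    intro y hy
    rw [dualP.smul_pair p (ψ u) y hp (hψ_gr k u hu), hψ u, hψ (SDQ.smul p u),
      dualQ.smul_pair p u (φ y) hp hu, hselfsmul, hφmul, hQPsmul, hQselfsmul]
  have hsh_smul : ∀ (p : P) (u : DQ), p * sh u = sh (SDQ.smul p u) := by
    intro p u
    obtain ⟨s, c, hc, hc0, rfl⟩ := decomp_exists SDQ.internal u
    rw [map_sum, Finset.mul_sum, map_sum, map_sum]
    refine Finset.sum_congr rfl (fun j _ => ?_)
    obtain ⟨t, b, hb, hb0, rfl⟩ := decomp_exists SP.internal p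
    rw [Finset.sum_mul, map_sum, LinearMap.sum_apply, map_sum]
    exact Finset.sum_congr rfl (fun i _ => hsh_smul_hom i (b i) (hb i) j (c j) (hc j))
  -- the ideal property
  have hIdeal : ∀ x ∈ LinearMap.range sh, SP.d x ∈ LinearMap.range sh ∧
      ∀ p : P, p * x ∈ LinearMap.range sh ∧ x * p ∈ LinearMap.range sh := by
    rintro x ⟨u, rfl⟩
    refine ⟨⟨SDQ.d u, (hsh_d u).symm⟩, fun p => ⟨⟨SDQ.smul p u, (hsh_smul p u).symm⟩, ?_⟩⟩
    obtain ⟨s, c, hc, hc0, rfl⟩ := decomp_exists SDQ.internal u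
    rw [map_sum, Finset.sum_mul]
    apply Submodule.sum_mem
    intro k _
    obtain ⟨t, b, hb, hb0, rfl⟩ := decomp_exists SP.internal p
    rw [Finset.mul_sum]
    apply Submodule.sum_mem
    intro i _
    have hck : sh (c k) ∈ SP.grZ k := hsh_gr k (c k) (hc k)
    unfold CDGAStruct.grZ at hck
    by_cases hk : 0 ≤ k
    · rw [if_pos hk] at hck
      rw [SP.gcomm hck (hb i)]
      exact Submodule.smul_mem _ _ ⟨SDQ.smul (b i) (c k), (hsh_smul (b i) (c k)).symm⟩
    · rw [if_neg hk, Submodule.mem_bot] at hck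
      rw [hck, zero_mul]
      exact Submodule.zero_mem _
  -- proj kills the image of sh
  have hproj_sh : ∀ u : DQ, proj (sh u) = 0 := by
    intro u
    have : sh u ∈ LinearMap.ker proj := by
      rw [hker]; exact ⟨u, rfl⟩
    exact this
  have hproj_grZ : ∀ (j : ℤ), ∀ a ∈ SP.grZ j, proj a ∈ SR.grZ j := by
    intro j a ha
    unfold CDGAStruct.grZ at ha ⊢
    by_cases h : 0 ≤ j
    · simp only [if_pos h] at ha ⊢
      exact hprojgr _ a ha
    · simp only [if_neg h, Submodule.mem_bot] at ha ⊢
      simp [ha]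
  -- homogeneous lifting along proj
  have hproj_lift : ∀ (j : ℤ), ∀ y ∈ SR.grZ j, ∃ a ∈ SP.grZ j, proj a = y := by
    intro j y hy
    unfold CDGAStruct.grZ at hy
    by_cases h : 0 ≤ j
    · rw [if_pos h] at hy
      obtain ⟨b, rfl⟩ := hprojsurj y
      obtain ⟨s, c, hc, hc0, hsum⟩ := decomp_exists SP.internal b
      set i0 := j.toNat with hi0
      set e : ℕ → R := fun i => proj (c i) - (if i = i0 then proj b else 0) with he
      have hce : ∀ i, e i ∈ SR.gr i := by
        intro i
        simp only [he]
        by_cases hii : i = i0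
        · rw [if_pos hii]
          exact Submodule.sub_mem _ (hprojgr i (c i) (hc i)) (hii ▸ hy)
        · rw [if_neg hii, sub_zero]
          exact hprojgr i (c i) (hc i)
      have hsum2 : ∑ i ∈ insert i0 s, proj (c i) = proj b := by
        rw [← Finset.sum_subset (Finset.subset_insert i0 s)
          (fun i _ hi => by rw [hc0 i hi, map_zero]), ← map_sum, ← hsum]
      have hsumz : ∑ i ∈ insert i0 s, e i = 0 := by
        simp only [he]
        rw [Finset.sum_sub_distrib, hsum2, Finset.sum_ite_eq' (insert i0 s) i0
          (fun _ => proj b)]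
        simp
      have hkey := decomp_zero SR.internal hce hsumz i0 (Finset.mem_insert_self i0 s)
      simp only [he, if_pos rfl] at hkey
      refine ⟨c i0, ?_, by rw [if_pos trivial] at hkey; exact sub_eq_zero.mp hkey⟩
      unfold CDGAStruct.grZ
      rw [if_pos h]
      exact hc i0
    · rw [if_neg h, Submodule.mem_bot] at hy
      exact ⟨0, Submodule.zero_mem _, by rw [map_zero, hy]⟩
  -- first components of semi-trivial products
  have hfst_mul : ∀ x y : P × DQ, (μP x y).1 = x.1 * y.1 := by
    obtain ⟨hμ1, hμ2, hμ3, hμ4⟩ := hμP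
    have key1 : ∀ (a : P) (m : DQ), (μP (a, 0) ((0 : P), m)).1 = 0 := by
      intro a m
      obtain ⟨t, b, hb, hb0, rfl⟩ := decomp_exists SP.internal a
      have : ((∑ i ∈ t, b i : P), (0 : DQ)) = ∑ i ∈ t, ((b i, 0) : P × DQ) := by
        rw [Prod.ext_iff]
        simp [Prod.fst_sum, Prod.snd_sum]
      rw [this, map_sum, LinearMap.sum_apply, Prod.fst_sum]
      apply Finset.sum_eq_zero
      intro i _
      rw [hμ2 i (b i) m (hb i)]
    have key2 : ∀ (a : P) (m : DQ), (μP ((0 : P), m) (a, 0)).1 = 0 := by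
      intro a m
      obtain ⟨t, b, hb, hb0, rfl⟩ := decomp_exists SP.internal a
      have h1 : ((∑ i ∈ t, b i : P), (0 : DQ)) = ∑ i ∈ t, ((b i, 0) : P × DQ) := by
        rw [Prod.ext_iff]
        simp [Prod.fst_sum, Prod.snd_sum]
      rw [h1, map_sum, Prod.fst_sum]
      apply Finset.sum_eq_zero
      intro i _
      obtain ⟨s, c, hc, hc0, rfl⟩ := decomp_exists SDQ.internal m
      have h2 : ((0 : P), (∑ k ∈ s, c k : DQ)) = ∑ k ∈ s, ((0, c k) : P × DQ) := by
        rw [Prod.ext_iff]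
        simp [Prod.fst_sum, Prod.snd_sum]
      rw [h2, map_sum, LinearMap.sum_apply, Prod.fst_sum]
      apply Finset.sum_eq_zero
      intro k _
      rw [hμ3 i k (b i) (c k) (hb i) (hc k)]
    rintro ⟨a, m⟩ ⟨b, m'⟩
    show (μP (a, m) (b, m')).1 = a * b
    have h : ((a, m) : P × DQ) = (a, 0) + (0, m) := by simp
    have h' : ((b, m') : P × DQ) = (b, 0) + (0, m') := by simp
    rw [h, h']
    simp only [map_add, LinearMap.add_apply]
    rw [hμ1 a b, hμ4 m m']
    simp only [Prod.fst_add, key1 a m', key2 b m, Prod.fst_zero]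
    simp
  -- the projection is a graded DGA morphism
  have hπ_hom : IsGradedDGAHom (coneGr SP SDQ) ((1 : P), (0 : DQ)) μP (coneD SP SDQ sh)
      SR.grZ 1 (LinearMap.mul ℚ R) SR.d (proj ∘ₗ LinearMap.fst ℚ P DQ) := by
    refine ⟨?_, ?_, ?_, ?_⟩
    · simpa using hproj1
    · intro x y
      simp only [LinearMap.comp_apply, LinearMap.fst_apply, LinearMap.mul_apply']
      rw [hfst_mul x y, hprojmul]
    · intro j x hx
      simp only [LinearMap.comp_apply, LinearMap.fst_apply]
      exact hproj_grZ j x.1 hx.1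
    · intro x
      simp only [LinearMap.comp_apply, LinearMap.fst_apply]
      have : (coneD SP SDQ sh x).1 = SP.d x.1 + sh x.2 := rfl
      rw [this, map_add, hproj_sh, add_zero, hprojd]
  refine ⟨hsh_inj, hIdeal, hπ_hom, ?_⟩
  -- the quasi-isomorphism property
  intro j
  constructor
  · -- surjective on cohomology
    rintro y ⟨hy_gr, hy_d⟩
    obtain ⟨a, ha, hpa⟩ := hproj_lift j y hy_gr
    have hda : proj (SP.d a) = 0 := by rw [hprojd, hpa, hy_d]
    have hda' : SP.d a ∈ LinearMap.range sh := by rw [← hker]; exact hda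
    obtain ⟨w, hw⟩ := hda'
    have hw_gr : w ∈ SDQ.gr (j + 1) :=
      hsh_gr_rev (j + 1) w (by rw [hw]; exact hd_grZ j a ha)
    have hw_d : SDQ.d w = 0 := by
      apply hsh_inj
      rw [← hsh_d, hw, SP.d_sq, map_zero]
    refine ⟨(a, -w), ⟨⟨ha, Submodule.neg_mem _ hw_gr⟩, ?_⟩, 0, Submodule.zero_mem _, ?_⟩
    · have h1 : coneD SP SDQ sh (a, -w) = (SP.d a + sh (-w), -(SDQ.d (-w))) := rfl
      rw [h1, Prod.mk_eq_zero]
      constructor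
      · rw [map_neg, hw]; simp
      · rw [map_neg, hw_d]; simp
    · simp only [LinearMap.comp_apply, LinearMap.fst_apply, map_zero]
      rw [hpa]
      simp
  · -- injective on cohomology
    rintro x ⟨hx_gr, hx_d⟩ ⟨r, hr_gr, hr_d⟩
    have hx1 : x.1 ∈ SP.grZ j := hx_gr.1
    have hx2 : x.2 ∈ SDQ.gr (j + 1) := hx_gr.2
    have hd1 : SP.d x.1 + sh x.2 = 0 := by
      have : (coneD SP SDQ sh x).1 = SP.d x.1 + sh x.2 := rfl
      rw [← this, hx_d]
      simp
    have hd2 : SDQ.d x.2 = 0 := by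
      have : (coneD SP SDQ sh x).2 = -(SDQ.d x.2) := rfl
      have h0 : (coneD SP SDQ sh x).2 = 0 := by rw [hx_d]; simp
      rw [this] at h0
      linear_combination (norm := abel) -h0
    obtain ⟨p, hp_gr, hpp⟩ := hproj_lift (j - 1) r hr_gr
    have hproj0 : proj (x.1 - SP.d p) = 0 := by
      rw [map_sub, hprojd, hpp, hr_d]
      simp only [LinearMap.comp_apply, LinearMap.fst_apply]
      exact sub_self _
    have hmem : x.1 - SP.d p ∈ LinearMap.range sh := by rw [← hker]; exact hproj0
    obtain ⟨v, hv⟩ := hmem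
    have hdp_gr : SP.d p ∈ SP.grZ j := by
      have := hd_grZ (j - 1) p hp_gr
      rwa [sub_add_cancel] at this
    have hv_gr : v ∈ SDQ.gr j :=
      hsh_gr_rev j v (by rw [hv]; exact Submodule.sub_mem _ hx1 hdp_gr)
    have hv_d : SDQ.d v = -x.2 := by
      apply hsh_inj
      rw [← hsh_d, hv, map_sub, SP.d_sq, sub_zero, map_neg]
      linear_combination (norm := abel) hd1
    refine ⟨(p, v), ⟨hp_gr, by rwa [sub_add_cancel]⟩, ?_⟩
    have h1 : coneD SP SDQ sh (p, v) = (SP.d p + sh v, -(SDQ.d v)) := rfl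
    rw [h1, hv, hv_d, neg_neg]
    have hx12 : x = (x.1, x.2) := rfl
    rw [hx12, Prod.mk.injEq]
    exact ⟨by abel, rfl⟩
end
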